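/- arXiv:2302.12581 — 7 statements merged into one kernel-verified Lean document; each statement's English description precedes it below -/
import Mathlib

section
/- Let U₁, V₁, U₂, V₂ be independent standard normal random variables, and let T = (U₁V₁)/(U₂V₂). Then T has the same distribution as the product C₁·C₂ of two independent standard Cauchy random variables, and its density is f_T(t) = (2/π²) · log|t| / (t² − 1) for t ∈ ℝ, |t| ≠ 1. -/
open MeasureTheory ProbabilityTheory Real Set Filter
open scoped ENNReal Topology

namespace NPR

/-- Scaling a `withDensity` measure on ℝ. -/
lemma map_const_mul_withDensity {a : ℝ} (ha : a ≠ 0) {f : ℝ → ℝ≥0∞} (hf : Measurable f) :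
    Measure.map (fun y => a * y) (volume.withDensity f) =
      volume.withDensity (fun t => f (a⁻¹ * t) * ENNReal.ofReal |a⁻¹|) := by
  ext s hs
  have hmul : Measurable fun y : ℝ => a * y := measurable_const_mul a
  rw [Measure.map_apply hmul hs, withDensity_apply _ (hmul hs), withDensity_apply _ hs]
  have key : Measure.map (fun y : ℝ => a * y) (volume.restrict ((fun y => a * y) ⁻¹' s)) =
      (ENNReal.ofReal |a⁻¹| • volume).restrict s := by
    rw [← Measure.restrict_map hmul hs, Real.map_volume_mul_left ha]
  calc ∫⁻ y in (fun y => a * y) ⁻¹' s, f y ∂volume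
      = ∫⁻ y in (fun y => a * y) ⁻¹' s, (fun t => f (a⁻¹ * t)) (a * y) ∂volume := by
        congr 1; ext y; simp [← mul_assoc, inv_mul_cancel₀ ha]
    _ = ∫⁻ t, f (a⁻¹ * t) ∂(Measure.map (fun y : ℝ => a * y)
          (volume.restrict ((fun y => a * y) ⁻¹' s))) := by
        exact (lintegral_map (hf.comp (measurable_const_mul a⁻¹)) hmul).symm
    _ = ∫⁻ t in s, f (a⁻¹ * t) ∂(ENNReal.ofReal |a⁻¹| • volume) := by rw [key]
    _ = ∫⁻ t in s, f (a⁻¹ * t) * ENNReal.ofReal |a⁻¹| ∂volume := by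
        rw [Measure.restrict_smul, lintegral_smul_measure,
          lintegral_mul_const' _ _ ENNReal.ofReal_ne_top, mul_comm, smul_eq_mul]
    _ = _ := rfl

/-- Mixture representation lemma. -/
lemma map_prod_eq_withDensity {F : ℝ → ℝ → ℝ} (hF : Measurable (Function.uncurry F))
    (ν ρ : Measure ℝ) [SFinite ν] [SFinite ρ] {k : ℝ → ℝ → ℝ≥0∞}
    (hk : Measurable (Function.uncurry k))
    (h : ∀ᵐ x ∂ν, Measure.map (F x) ρ = volume.withDensity (k x)) :
    Measure.map (fun p : ℝ × ℝ => F p.1 p.2) (ν.prod ρ) =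
      volume.withDensity (fun t => ∫⁻ x, k x t ∂ν) := by
  ext s hs
  have hF' : Measurable fun p : ℝ × ℝ => F p.1 p.2 := hF
  rw [Measure.map_apply hF' hs, withDensity_apply _ hs, Measure.prod_apply (hF' hs)]
  have h1 : ∫⁻ x, ρ (Prod.mk x ⁻¹' ((fun p : ℝ × ℝ => F p.1 p.2) ⁻¹' s)) ∂ν
      = ∫⁻ x, ∫⁻ t in s, k x t ∂volume ∂ν := by
    refine lintegral_congr_ae ?_
    filter_upwards [h] with x hx
    have : Prod.mk x ⁻¹' ((fun p : ℝ × ℝ => F p.1 p.2) ⁻¹' s) = F x ⁻¹' s := rfl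
    rw [this, ← Measure.map_apply hF.of_uncurry_left hs, hx, withDensity_apply _ hs]
  rw [h1, lintegral_lintegral_swap (hk.aemeasurable)]


lemma hasDerivAt_exp_aux {c : ℝ} (hc : c ≠ 0) (x : ℝ) :
    HasDerivAt (fun x => -rexp (-(c * x ^ 2)) / (2 * c)) (x * rexp (-(c * x ^ 2))) x := by
  have h1 : HasDerivAt (fun x : ℝ => -(c * x ^ 2)) (-(c * (2 * x))) x := by
    have h := ((hasDerivAt_pow 2 x).const_mul c).neg
    simp at h
    exact h
  have h2 := (h1.exp).neg.div_const (2 * c)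
  refine h2.congr_deriv ?_
  field_simp

lemma integral_Ioi_mul_exp {c : ℝ} (hc : 0 < c) :
    ∫ x in Ioi (0:ℝ), x * rexp (-(c * x ^ 2)) = 1 / (2 * c) := by
  have hderiv : ∀ x ∈ Ioi (0:ℝ), HasDerivAt (fun x => -rexp (-(c * x ^ 2)) / (2 * c))
      (x * rexp (-(c * x ^ 2))) x := fun x _ => hasDerivAt_exp_aux hc.ne' x
  have htend : Tendsto (fun x => -rexp (-(c * x ^ 2)) / (2 * c)) atTop (𝓝 0) := by
    have h0 : Tendsto (fun x : ℝ => c * x ^ 2) atTop atTop :=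
      (tendsto_pow_atTop two_ne_zero).const_mul_atTop hc
    have h1 : Tendsto (fun x : ℝ => rexp (-(c * x ^ 2))) atTop (𝓝 0) :=
      Real.tendsto_exp_atBot.comp (tendsto_neg_atTop_atBot.comp h0)
    simpa using h1.neg.div_const (2 * c)
  have := integral_Ioi_of_hasDerivAt_of_nonneg (a := 0)
    (g := fun x => -rexp (-(c * x ^ 2)) / (2 * c)) ?_ hderiv ?_ htend
  · rw [this]; norm_num; ring
  · exact (Continuous.div_const (continuous_exp.comp (by continuity)).neg _).continuousWithinAt
  · intro x hx
    have : (0:ℝ) < x := hx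
    positivity

lemma integral_abs_mul_exp {c : ℝ} (hc : 0 < c) :
    ∫ x : ℝ, |x| * rexp (-(c * x ^ 2)) = 1 / c := by
  have h2 : ∫ x : ℝ, |x| * rexp (-(c * x ^ 2)) = 2 * ∫ x in Ioi (0:ℝ), x * rexp (-(c * x ^ 2)) := by
    rw [← integral_comp_abs (f := fun u => u * rexp (-(c * u ^ 2)))]
    congr 1; funext x; simp [sq_abs]
  rw [h2, integral_Ioi_mul_exp hc]
  field_simp

lemma integrable_abs_mul_exp {c : ℝ} (hc : 0 < c) :
    Integrable fun x : ℝ => |x| * rexp (-(c * x ^ 2)) := by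
  have h := integrable_rpow_mul_exp_neg_mul_sq hc (s := 1) (by norm_num)
  simp_rw [rpow_one] at h
  refine h.abs.congr (Filter.Eventually.of_forall fun x => ?_)
  simp [abs_mul, abs_of_pos (exp_pos _), neg_mul]

set_option maxHeartbeats 1000000 in
lemma integral_Ioi_cauchy {a : ℝ} (ha : 0 < a) (ha1 : a ≠ 1) :
    ∫ x in Ioi (0:ℝ), x / ((1 + x ^ 2) * (x ^ 2 + a)) = Real.log a / (2 * (a - 1)) := by
  have ha1' : a - 1 ≠ 0 := sub_ne_zero.mpr ha1
  set g : ℝ → ℝ := fun x => (Real.log (1 + x ^ 2) - Real.log (x ^ 2 + a)) / (2 * (a - 1))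
    with hgdef
  have hpos1 : ∀ x : ℝ, (0:ℝ) < 1 + x ^ 2 := fun x => by positivity
  have hpos2 : ∀ x : ℝ, (0:ℝ) < x ^ 2 + a := fun x => by positivity
  have hderiv : ∀ x ∈ Ioi (0:ℝ), HasDerivAt g (x / ((1 + x ^ 2) * (x ^ 2 + a))) x := by
    intro x _
    have h1 : HasDerivAt (fun x : ℝ => 1 + x ^ 2) (2 * x) x := by
      simpa using (hasDerivAt_pow 2 x).const_add 1
    have h2 : HasDerivAt (fun x : ℝ => x ^ 2 + a) (2 * x) x := by
      simpa using (hasDerivAt_pow 2 x).add_const a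
    have h3 := ((h1.log (hpos1 x).ne').sub (h2.log (hpos2 x).ne')).div_const (2 * (a - 1))
    refine h3.congr_deriv ?_
    have e1 := (hpos1 x).ne'
    have e2 := (hpos2 x).ne'
    field_simp
    ring
  have hr : Tendsto (fun x : ℝ => (1 + x ^ 2) / (x ^ 2 + a)) atTop (𝓝 1) := by
    have h0 : Tendsto (fun x : ℝ => (x ^ 2 : ℝ)⁻¹) atTop (𝓝 0) :=
      (tendsto_pow_atTop two_ne_zero).inv_tendsto_atTop
    have hcont : ContinuousAt (fun u : ℝ => (u + 1) / (1 + a * u)) 0 := by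
      refine ContinuousAt.div (by fun_prop) (by fun_prop) (by norm_num)
    have h2 := hcont.tendsto.comp h0
    have h3 : ((0:ℝ) + 1) / (1 + a * 0) = 1 := by norm_num
    rw [h3] at h2
    refine h2.congr' ?_
    filter_upwards [eventually_gt_atTop (0:ℝ)] with x hx
    simp only [Function.comp_apply]
    have hx2 : x ^ 2 ≠ 0 := by positivity
    have := (hpos2 x).ne'
    field_simp
  have hlog : Tendsto (fun x : ℝ => Real.log ((1 + x ^ 2) / (x ^ 2 + a))) atTop (𝓝 0) := by
    have h := (Real.continuousAt_log one_ne_zero).tendsto.comp hr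
    rw [Real.log_one] at h
    exact h
  have htend : Tendsto g atTop (𝓝 0) := by
    have h := hlog.div_const (2 * (a - 1))
    rw [zero_div] at h
    refine h.congr fun x => ?_
    rw [Real.log_div (hpos1 x).ne' (hpos2 x).ne']
  have hc1 : Continuous fun x : ℝ => Real.log (1 + x ^ 2) :=
    (continuous_const.add (continuous_pow 2)).log fun x => (hpos1 x).ne'
  have hc2 : Continuous fun x : ℝ => Real.log (x ^ 2 + a) :=
    ((continuous_pow 2).add continuous_const).log fun x => (hpos2 x).ne'
  have hcontg : ContinuousWithinAt g (Ici 0) 0 :=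
    (((hc1.sub hc2).div_const _)).continuousWithinAt
  have hnn : ∀ x ∈ Ioi (0:ℝ), 0 ≤ x / ((1 + x ^ 2) * (x ^ 2 + a)) := by
    intro x hx
    have hx0 : (0:ℝ) < x := hx
    exact div_nonneg hx0.le (mul_pos (hpos1 x) (hpos2 x)).le
  have key := integral_Ioi_of_hasDerivAt_of_nonneg (a := 0) hcontg hderiv hnn htend
  rw [key]
  simp only [hgdef]
  norm_num
  ring

lemma gpdf_eq (x : ℝ) :
    gaussianPDFReal 0 1 x = (Real.sqrt (2 * π))⁻¹ * rexp (-(x ^ 2) / 2) := by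
  simp [gaussianPDFReal]

lemma ae_ne_zero : ∀ᵐ x : ℝ ∂volume, x ≠ 0 := by
  rw [ae_iff]
  have : {x : ℝ | ¬x ≠ 0} = {0} := by ext x; simp
  rw [this]
  exact measure_singleton 0

lemma gauss_map {x : ℝ} (hx : x ≠ 0) :
    Measure.map (fun y => y / x) (gaussianReal 0 1) =
      volume.withDensity fun t => ENNReal.ofReal (gaussianPDFReal 0 1 (x * t) * |x|) := by
  rw [gaussianReal_of_var_ne_zero _ one_ne_zero]
  have h1 : (fun y : ℝ => y / x) = fun y => x⁻¹ * y := by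
    funext y; rw [div_eq_inv_mul]
  rw [h1, map_const_mul_withDensity (inv_ne_zero hx) (measurable_gaussianPDF 0 1)]
  congr 1
  funext t
  rw [inv_inv, gaussianPDF, ENNReal.ofReal_mul (gaussianPDFReal_nonneg 0 1 _)]


lemma gauss_mix (t : ℝ) :
    ∫⁻ x, ENNReal.ofReal (gaussianPDFReal 0 1 (x * t) * |x|) ∂(gaussianReal 0 1)
      = ENNReal.ofReal (1 / (π * (1 + t ^ 2))) := by
  have hmeas : Measurable fun x : ℝ => ENNReal.ofReal (gaussianPDFReal 0 1 (x * t) * |x|) :=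
    (((measurable_gaussianPDFReal 0 1).comp (measurable_id.mul_const t)).mul
      measurable_abs).ennreal_ofReal
  rw [gaussianReal_of_var_ne_zero _ one_ne_zero,
    lintegral_withDensity_eq_lintegral_mul _ (measurable_gaussianPDF 0 1) hmeas]
  have hc : (0:ℝ) < (1 + t ^ 2) / 2 := by positivity
  have hpt : ∀ x : ℝ, (gaussianPDF 0 1 * fun x => ENNReal.ofReal (gaussianPDFReal 0 1 (x * t) * |x|)) x
      = ENNReal.ofReal ((2 * π)⁻¹ * (|x| * rexp (-((1 + t ^ 2) / 2 * x ^ 2)))) := by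
    intro x
    simp only [Pi.mul_apply, gaussianPDF]
    rw [← ENNReal.ofReal_mul (gaussianPDFReal_nonneg 0 1 _)]
    congr 1
    rw [gpdf_eq, gpdf_eq]
    rw [show ((Real.sqrt (2*π))⁻¹ * rexp (-(x^2)/2)) * ((Real.sqrt (2*π))⁻¹ * rexp (-((x*t)^2)/2) * |x|)
        = ((Real.sqrt (2*π)) * (Real.sqrt (2*π)))⁻¹ * (|x| * (rexp (-(x^2)/2) * rexp (-((x*t)^2)/2))) by ring]
    rw [Real.mul_self_sqrt (by positivity), ← Real.exp_add]
    congr 2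
    ring
  simp_rw [hpt]
  rw [← ofReal_integral_eq_lintegral_ofReal
    ((integrable_abs_mul_exp hc).const_mul _)
    (Filter.Eventually.of_forall fun x => by positivity)]
  rw [integral_const_mul, integral_abs_mul_exp hc]
  congr 1
  have hπ : (0:ℝ) < π := Real.pi_pos
  field_simp

lemma gaussian_ratio :
    Measure.map (fun p : ℝ × ℝ => p.1 / p.2) ((gaussianReal 0 1).prod (gaussianReal 0 1)) =
      volume.withDensity fun x => ENNReal.ofReal (1 / (π * (1 + x ^ 2))) := by
  have hswap : Measure.map (fun p : ℝ × ℝ => p.1 / p.2) ((gaussianReal 0 1).prod (gaussianReal 0 1))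
      = Measure.map (fun p : ℝ × ℝ => p.2 / p.1) ((gaussianReal 0 1).prod (gaussianReal 0 1)) := by
    conv_lhs => rw [← Measure.prod_swap]
    rw [Measure.map_map (g := fun p : ℝ × ℝ => p.1 / p.2) (measurable_fst.div measurable_snd) measurable_swap]
    rfl
  rw [hswap]
  have hmix := map_prod_eq_withDensity (F := fun x y => y / x)
    (measurable_snd.div measurable_fst) (gaussianReal 0 1) (gaussianReal 0 1)
    (k := fun x t => ENNReal.ofReal (gaussianPDFReal 0 1 (x * t) * |x|))
    ((((measurable_gaussianPDFReal 0 1).comp (measurable_fst.mul measurable_snd)).mul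
      measurable_fst.abs).ennreal_ofReal) ?_
  · rw [hmix]
    congr 1
    funext t
    exact gauss_mix t
  · have h0 : ∀ᵐ x ∂(gaussianReal 0 1), x ≠ 0 :=
      (gaussianReal_absolutelyContinuous 0 one_ne_zero).ae_le ae_ne_zero
    filter_upwards [h0] with x hx
    exact gauss_map hx


lemma cpdf_measurable : Measurable fun x : ℝ => ENNReal.ofReal (1 / (π * (1 + x ^ 2))) := by
  refine Measurable.ennreal_ofReal ?_
  fun_prop

lemma cauchy_map {x : ℝ} (hx : x ≠ 0) :
    Measure.map (fun y => x * y)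
        (volume.withDensity fun u => ENNReal.ofReal (1 / (π * (1 + u ^ 2)))) =
      volume.withDensity fun t =>
        ENNReal.ofReal (1 / (π * (1 + (x⁻¹ * t) ^ 2)) * |x⁻¹|) := by
  rw [map_const_mul_withDensity hx cpdf_measurable]
  congr 1
  funext t
  rw [← ENNReal.ofReal_mul (by positivity)]

lemma cauchy_integrand_eq {t x : ℝ} (hx : x ≠ 0) :
    1 / (π * (1 + x ^ 2)) * (1 / (π * (1 + (x⁻¹ * t) ^ 2)) * |x⁻¹|)
      = (1 / π ^ 2) * (|x| / ((1 + x ^ 2) * (x ^ 2 + t ^ 2))) := by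
  have hb : |x| ≠ 0 := abs_ne_zero.mpr hx
  have hx2 : x ^ 2 = |x| ^ 2 := (sq_abs x).symm
  have hπ : π ≠ 0 := Real.pi_ne_zero
  rw [abs_inv, mul_pow, inv_pow]
  rw [hx2]
  have h1 : (1 : ℝ) + |x| ^ 2 ≠ 0 := by positivity
  have h2 : |x| ^ 2 + t ^ 2 ≠ 0 := by positivity
  field_simp

lemma cauchy_mix {t : ℝ} (ht : t ≠ 0) (ht1 : t ^ 2 ≠ 1) :
    ∫⁻ x, ENNReal.ofReal (1 / (π * (1 + (x⁻¹ * t) ^ 2)) * |x⁻¹|)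
        ∂(volume.withDensity fun u => ENNReal.ofReal (1 / (π * (1 + u ^ 2))))
      = ENNReal.ofReal (2 / π ^ 2 * Real.log |t| / (t ^ 2 - 1)) := by
  have hmeas : Measurable fun x : ℝ => ENNReal.ofReal (1 / (π * (1 + (x⁻¹ * t) ^ 2)) * |x⁻¹|) := by
    refine Measurable.ennreal_ofReal ?_
    fun_prop
  rw [lintegral_withDensity_eq_lintegral_mul _ cpdf_measurable hmeas]
  have hae : (fun x => ((fun u => ENNReal.ofReal (1 / (π * (1 + u ^ 2)))) *
        fun x => ENNReal.ofReal (1 / (π * (1 + (x⁻¹ * t) ^ 2)) * |x⁻¹|)) x)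
      =ᵐ[volume] fun x =>
        ENNReal.ofReal (1 / π ^ 2 * (|x| / ((1 + x ^ 2) * (x ^ 2 + t ^ 2)))) := by
    filter_upwards [ae_ne_zero] with x hx
    simp only [Pi.mul_apply]
    rw [← ENNReal.ofReal_mul (by positivity), cauchy_integrand_eq hx]
  rw [lintegral_congr_ae hae]
  have ht2 : (0:ℝ) < t ^ 2 := by positivity
  have habs0 : (0:ℝ) < |t| := abs_pos.mpr ht
  have hcont : Continuous fun x : ℝ => 1 / π ^ 2 * (|x| / ((1 + x ^ 2) * (x ^ 2 + t ^ 2))) := by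
    refine continuous_const.mul (Continuous.div continuous_abs (by fun_prop) fun x => ?_)
    positivity
  have hb : ∀ x : ℝ, ‖1 / π ^ 2 * (|x| / ((1 + x ^ 2) * (x ^ 2 + t ^ 2)))‖
      ≤ 1 / (π ^ 2 * (2 * |t|)) * (1 + x ^ 2)⁻¹ := by
    intro x
    have h1 : (0:ℝ) < 1 + x ^ 2 := by positivity
    have h2 : (0:ℝ) < x ^ 2 + t ^ 2 := by positivity
    rw [Real.norm_eq_abs, abs_of_nonneg (by positivity)]
    have key : |x| / ((1 + x ^ 2) * (x ^ 2 + t ^ 2)) ≤ 1 / (2 * |t|) * (1 + x ^ 2)⁻¹ := by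
      rw [show (1:ℝ) / (2 * |t|) * (1 + x ^ 2)⁻¹ = 1 / (2 * |t| * (1 + x ^ 2)) from by
        rw [one_div, one_div, ← mul_inv], div_le_div_iff₀ (by positivity) (by positivity)]
      nlinarith [sq_nonneg (|x| - |t|), sq_abs x, sq_abs t, abs_nonneg x, abs_nonneg t,
        mul_pos h1 h2]
    calc 1 / π ^ 2 * (|x| / ((1 + x ^ 2) * (x ^ 2 + t ^ 2)))
        ≤ 1 / π ^ 2 * (1 / (2 * |t|) * (1 + x ^ 2)⁻¹) :=
          mul_le_mul_of_nonneg_left key (by positivity)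
      _ = 1 / (π ^ 2 * (2 * |t|)) * (1 + x ^ 2)⁻¹ := by ring
  have hint : Integrable fun x : ℝ => 1 / π ^ 2 * (|x| / ((1 + x ^ 2) * (x ^ 2 + t ^ 2))) := by
    refine (integrable_inv_one_add_sq.const_mul _).mono' hcont.aestronglyMeasurable
      (Filter.Eventually.of_forall hb)
  rw [← ofReal_integral_eq_lintegral_ofReal hint
    (Filter.Eventually.of_forall fun x => by positivity)]
  congr 1
  rw [integral_const_mul]
  have habs : ∫ x : ℝ, |x| / ((1 + x ^ 2) * (x ^ 2 + t ^ 2))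
      = 2 * ∫ x in Ioi (0:ℝ), x / ((1 + x ^ 2) * (x ^ 2 + t ^ 2)) := by
    rw [← integral_comp_abs (f := fun u => u / ((1 + u ^ 2) * (u ^ 2 + t ^ 2)))]
    congr 1
    funext x
    rw [sq_abs]
  rw [habs, integral_Ioi_cauchy ht2 ht1]
  rw [show Real.log (t ^ 2) = 2 * Real.log |t| from by
    rw [← sq_abs, Real.log_pow]; push_cast; ring]
  have ht1' : t ^ 2 - 1 ≠ 0 := sub_ne_zero.mpr ht1
  have hπ : π ≠ 0 := Real.pi_ne_zero
  field_simp

lemma ae_sq_ne_one : ∀ᵐ t : ℝ ∂volume, t ^ 2 ≠ 1 := by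
  rw [ae_iff]
  refine measure_mono_null ?_ (Set.Finite.measure_zero (Set.toFinite ({1, -1} : Set ℝ)) volume)
  intro t h
  simp only [mem_setOf_eq, not_not] at h
  have h2 : (t - 1) * (t + 1) = 0 := by linear_combination h
  rcases mul_eq_zero.mp h2 with h3 | h3
  · left; linarith
  · right; simp; linarith

lemma cauchy_prod :
    Measure.map (fun p : ℝ × ℝ => p.1 * p.2)
        ((volume.withDensity fun x => ENNReal.ofReal (1 / (π * (1 + x ^ 2)))).prod
         (volume.withDensity fun x => ENNReal.ofReal (1 / (π * (1 + x ^ 2))))) =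
      volume.withDensity fun t => ENNReal.ofReal (2 / π ^ 2 * Real.log |t| / (t ^ 2 - 1)) := by
  have hk : Measurable (Function.uncurry fun x t : ℝ =>
      ENNReal.ofReal (1 / (π * (1 + (x⁻¹ * t) ^ 2)) * |x⁻¹|)) := by
    refine Measurable.ennreal_ofReal ?_
    fun_prop
  have hmix := map_prod_eq_withDensity (F := fun x y => x * y)
    (measurable_fst.mul measurable_snd)
    (volume.withDensity fun x => ENNReal.ofReal (1 / (π * (1 + x ^ 2))))
    (volume.withDensity fun x => ENNReal.ofReal (1 / (π * (1 + x ^ 2))))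
    (k := fun x t => ENNReal.ofReal (1 / (π * (1 + (x⁻¹ * t) ^ 2)) * |x⁻¹|)) hk ?_
  · rw [hmix]
    refine withDensity_congr_ae ?_
    filter_upwards [ae_ne_zero, ae_sq_ne_one] with t h0 h1
    exact cauchy_mix h0 h1
  · have h0 : ∀ᵐ x ∂(volume.withDensity fun x : ℝ => ENNReal.ofReal (1 / (π * (1 + x ^ 2)))),
        x ≠ 0 := (withDensity_absolutelyContinuous volume _).ae_le ae_ne_zero
    filter_upwards [h0] with x hx
    exact cauchy_map hx

lemma iIndepFun_congr_ae {Ω : Type*} [MeasurableSpace Ω] {μ : Measure Ω}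
    {f g : Fin 4 → Ω → ℝ} (h : iIndepFun f μ)
    (hae : ∀ i, f i =ᵐ[μ] g i) : iIndepFun g μ := by
  rw [iIndepFun_iff_measure_inter_preimage_eq_mul] at h ⊢
  intro S sets hmeas
  have hae' : ∀ᵐ ω ∂μ, ∀ i, f i ω = g i ω := ae_all_iff.mpr hae
  have h1 : μ (⋂ i ∈ S, g i ⁻¹' sets i) = μ (⋂ i ∈ S, f i ⁻¹' sets i) := by
    refine measure_congr (Filter.eventuallyEq_set.mpr ?_)
    filter_upwards [hae'] with ω hω
    simp only [mem_iInter, mem_preimage]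
    constructor <;> intro hmem i hi
    · rw [hω i]; exact hmem i hi
    · rw [← hω i]; exact hmem i hi
  rw [h1, h S hmeas]
  refine Finset.prod_congr rfl fun i _ => ?_
  refine measure_congr (Filter.eventuallyEq_set.mpr ?_)
  filter_upwards [hae i] with ω hω
  simp [mem_preimage, hω]

end NPR

open NPR Set Filter in
theorem normal_product_ratio {Ω : Type*} [MeasurableSpace Ω] (μ : Measure Ω)
    [IsProbabilityMeasure μ] (U₁ V₁ U₂ V₂ : Ω → ℝ)
    (hU₁ : Measure.map U₁ μ = gaussianReal 0 1)
    (hV₁ : Measure.map V₁ μ = gaussianReal 0 1)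
    (hU₂ : Measure.map U₂ μ = gaussianReal 0 1)
    (hV₂ : Measure.map V₂ μ = gaussianReal 0 1)
    (hInd : iIndepFun ![U₁, V₁, U₂, V₂] μ) :
    (Measure.map (fun ω => (U₁ ω * V₁ ω) / (U₂ ω * V₂ ω)) μ =
      Measure.map (fun p : ℝ × ℝ => p.1 * p.2)
        ((volume.withDensity fun x => ENNReal.ofReal (1/(π*(1+x^2)))).prod
         (volume.withDensity fun x => ENNReal.ofReal (1/(π*(1+x^2)))))) ∧
    Measure.map (fun ω => (U₁ ω * V₁ ω) / (U₂ ω * V₂ ω)) μ =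
      volume.withDensity fun t => ENNReal.ofReal ((2/π^2) * Real.log |t| / (t^2 - 1)) := by
  -- a.e.-measurability from the laws
  have hGne : (gaussianReal 0 1 : Measure ℝ) ≠ 0 := IsProbabilityMeasure.ne_zero _
  have haem : ∀ (W : Ω → ℝ), Measure.map W μ = gaussianReal 0 1 → AEMeasurable W μ := by
    intro W hW
    by_contra h
    rw [Measure.map_of_not_aemeasurable h] at hW
    exact hGne hW.symm
  have aU₁ := haem U₁ hU₁; have aV₁ := haem V₁ hV₁
  have aU₂ := haem U₂ hU₂; have aV₂ := haem V₂ hV₂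
  have ha : ∀ i, AEMeasurable (![U₁, V₁, U₂, V₂] i) μ := by
    intro i; fin_cases i
    exacts [aU₁, aV₁, aU₂, aV₂]
  let g : Fin 4 → Ω → ℝ := fun i => (ha i).mk _
  have hae : ∀ i, (![U₁, V₁, U₂, V₂] : Fin 4 → Ω → ℝ) i =ᵐ[μ] g i := fun i => (ha i).ae_eq_mk
  have hgm : ∀ i, Measurable (g i) := fun i => (ha i).measurable_mk
  have hInd' : iIndepFun g μ := iIndepFun_congr_ae hInd hae
  have hmap : ∀ i, Measure.map (g i) μ = gaussianReal 0 1 := by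
    intro i
    rw [← Measure.map_congr (hae i)]
    fin_cases i
    exacts [hU₁, hV₁, hU₂, hV₂]
  have hdiv : Measurable fun p : ℝ × ℝ => p.1 / p.2 := measurable_fst.div measurable_snd
  have hmul : Measurable fun p : ℝ × ℝ => p.1 * p.2 := measurable_fst.mul measurable_snd
  let X : Ω → ℝ := fun ω => g 0 ω / g 2 ω
  let Y : Ω → ℝ := fun ω => g 1 ω / g 3 ω
  have hXm : Measurable X := (hgm 0).div (hgm 2)
  have hYm : Measurable Y := (hgm 1).div (hgm 3)
  have ratio_law : ∀ i j : Fin 4, i ≠ j →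
      Measure.map (fun ω => g i ω / g j ω) μ =
        volume.withDensity fun x => ENNReal.ofReal (1 / (π * (1 + x ^ 2))) := by
    intro i j hij
    have hpair : IndepFun (g i) (g j) μ := hInd'.indepFun hij
    have hjoint : Measure.map (fun ω => (g i ω, g j ω)) μ
        = (Measure.map (g i) μ).prod (Measure.map (g j) μ) :=
      (indepFun_iff_map_prod_eq_prod_map_map (hgm i).aemeasurable (hgm j).aemeasurable).mp hpair
    calc Measure.map (fun ω => g i ω / g j ω) μ
        = Measure.map (fun p : ℝ × ℝ => p.1 / p.2) (Measure.map (fun ω => (g i ω, g j ω)) μ) := by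
          rw [Measure.map_map hdiv ((hgm i).prodMk (hgm j))]; rfl
      _ = Measure.map (fun p : ℝ × ℝ => p.1 / p.2) ((gaussianReal 0 1).prod (gaussianReal 0 1)) := by
          rw [hjoint, hmap i, hmap j]
      _ = _ := gaussian_ratio
  have hXlaw : Measure.map X μ =
      volume.withDensity fun x => ENNReal.ofReal (1 / (π * (1 + x ^ 2))) :=
    ratio_law 0 2 (by decide)
  have hYlaw : Measure.map Y μ =
      volume.withDensity fun x => ENNReal.ofReal (1 / (π * (1 + x ^ 2))) :=
    ratio_law 1 3 (by decide)
  have hpair2 : IndepFun (fun ω => (g 0 ω, g 2 ω)) (fun ω => (g 1 ω, g 3 ω)) μ :=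
    hInd'.indepFun_prodMk_prodMk hgm 0 2 1 3 (by decide) (by decide) (by decide) (by decide)
  have hXY : IndepFun X Y μ := hpair2.comp hdiv hdiv
  have hjointXY : Measure.map (fun ω => (X ω, Y ω)) μ
      = (Measure.map X μ).prod (Measure.map Y μ) :=
    (indepFun_iff_map_prod_eq_prod_map_map hXm.aemeasurable hYm.aemeasurable).mp hXY
  have hprodlaw : Measure.map (fun ω => X ω * Y ω) μ =
      Measure.map (fun p : ℝ × ℝ => p.1 * p.2)
        ((volume.withDensity fun x => ENNReal.ofReal (1 / (π * (1 + x ^ 2)))).prod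
         (volume.withDensity fun x => ENNReal.ofReal (1 / (π * (1 + x ^ 2))))) := by
    calc Measure.map (fun ω => X ω * Y ω) μ
        = Measure.map (fun p : ℝ × ℝ => p.1 * p.2) (Measure.map (fun ω => (X ω, Y ω)) μ) := by
          rw [Measure.map_map hmul (hXm.prodMk hYm)]; rfl
      _ = _ := by rw [hjointXY, hXlaw, hYlaw]
  have hTae : (fun ω => (U₁ ω * V₁ ω) / (U₂ ω * V₂ ω)) =ᵐ[μ] fun ω => X ω * Y ω := by
    filter_upwards [hae 0, hae 1, hae 2, hae 3] with ω h1 h2 h3 h4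
    have e : X ω * Y ω = (g 0 ω * g 1 ω) / (g 2 ω * g 3 ω) :=
      div_mul_div_comm (g 0 ω) (g 2 ω) (g 1 ω) (g 3 ω)
    rw [e, ← h1, ← h2, ← h3, ← h4]
    rfl
  have hT : Measure.map (fun ω => (U₁ ω * V₁ ω) / (U₂ ω * V₂ ω)) μ
      = Measure.map (fun ω => X ω * Y ω) μ := Measure.map_congr hTae
  exact ⟨hT.trans hprodlaw, by rw [hT, hprodlaw, cauchy_prod]⟩
end

section
/- Let X ∼ VG(m, α₁, β₁, 0) and Y ∼ VG(n, α₂, β₂, 0) be independent with m, n > −1/2 and 0 ≤ |β_i| < α_i. Then the mean of Z = X/Y is undefined: E[|Z|] = ∞. -/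
open MeasureTheory ProbabilityTheory Real

/-- Modified Bessel function of the second kind. -/
noncomputable def besselK (ν x : ℝ) : ℝ :=
  ∫ t in Set.Ioi (0:ℝ), Real.exp (-x * Real.cosh t) * Real.cosh (ν * t)

/-- Variance-gamma density with location 0. -/
noncomputable def vgPDF (m α β x : ℝ) : ℝ :=
  (Real.sqrt (α^2 - β^2)) ^ (2*m+1) / (Real.sqrt π * (2*α) ^ m * Real.Gamma (m + 1/2)) *
    Real.exp (β * x) * |x| ^ m * besselK m (α * |x|)

lemma cosh_le_exp_abs (u : ℝ) : Real.cosh u ≤ Real.exp |u| := by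
  rw [← Real.cosh_abs, Real.cosh_eq]
  have h1 : Real.exp (-|u|) ≤ Real.exp |u| :=
    Real.exp_le_exp.2 (by linarith [abs_nonneg u])
  linarith

lemma exp_abs_div_two_le_cosh (u : ℝ) : Real.exp |u| / 2 ≤ Real.cosh u := by
  rw [← Real.cosh_abs, Real.cosh_eq]
  have := Real.exp_pos (-|u|)
  linarith

lemma one_add_sq_div_four_le_cosh (t : ℝ) : 1 + t ^ 2 / 4 ≤ Real.cosh t := by
  rw [← Real.cosh_abs, Real.cosh_eq]
  have h1 : 1 + |t| + |t| ^ 2 / 2 ≤ Real.exp |t| :=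
    Real.quadratic_le_exp_of_nonneg (abs_nonneg t)
  have h2 : 1 - |t| ≤ Real.exp (-|t|) := by
    have := Real.add_one_le_exp (-|t|); linarith
  have h3 : |t| ^ 2 = t ^ 2 := sq_abs t
  nlinarith

lemma besselK_integrand_integrable (ν x : ℝ) (hx : 0 < x) :
    IntegrableOn (fun t => Real.exp (-x * Real.cosh t) * Real.cosh (ν * t)) (Set.Ioi 0) := by
  have hg : Integrable (fun t : ℝ =>
      Real.exp (-x + ν ^ 2 / x) * Real.exp (-(x / 4) * (t - 2 * |ν| / x) ^ 2)) volume :=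
    ((integrable_exp_neg_mul_sq (by positivity : (0:ℝ) < x / 4)).comp_sub_right
      (2 * |ν| / x)).const_mul _
  refine Integrable.mono' hg.integrableOn ?_ ?_
  · exact ((Real.continuous_exp.comp (continuous_const.mul Real.continuous_cosh)).mul
      (Real.continuous_cosh.comp (continuous_const.mul continuous_id))).aestronglyMeasurable
  · rw [ae_restrict_iff' measurableSet_Ioi]
    filter_upwards with t ht
    have ht' : (0:ℝ) < t := ht
    have h1 : Real.cosh (ν * t) ≤ Real.exp (|ν| * t) := by
      have := cosh_le_exp_abs (ν * t)
      rwa [abs_mul, abs_of_pos ht'] at this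
    have h2 : Real.exp (-x * Real.cosh t) ≤ Real.exp (-x * (1 + t ^ 2 / 4)) := by
      apply Real.exp_le_exp.2
      have := one_add_sq_div_four_le_cosh t
      nlinarith
    have hpos : (0:ℝ) < Real.exp (-x * Real.cosh t) := Real.exp_pos _
    have hcpos : (0:ℝ) < Real.cosh (ν * t) := Real.cosh_pos _
    rw [Real.norm_eq_abs, abs_of_pos (by positivity)]
    calc Real.exp (-x * Real.cosh t) * Real.cosh (ν * t)
        ≤ Real.exp (-x * (1 + t ^ 2 / 4)) * Real.exp (|ν| * t) := by
          exact mul_le_mul h2 h1 hcpos.le (Real.exp_pos _).le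
      _ ≤ Real.exp (-x + ν ^ 2 / x) * Real.exp (-(x / 4) * (t - 2 * |ν| / x) ^ 2) := by
          rw [← Real.exp_add, ← Real.exp_add]
          apply le_of_eq
          apply Real.exp_eq_exp.2
          have hsq : ν ^ 2 = |ν| ^ 2 := (sq_abs ν).symm
          have hx' : x ≠ 0 := hx.ne'
          rw [hsq]; ring_nf
          field_simp
          ring_nf


lemma besselK_lower (ν : ℝ) {x : ℝ} (hx : 0 < x) (hx1 : x ≤ Real.exp (-1)) :
    Real.exp (-1 - |ν|) / 2 * x ^ (-|ν|) ≤ besselK ν x := by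
  set L : ℝ := -Real.log x with hL
  have hL1 : 1 ≤ L := by
    have := Real.log_le_log hx hx1
    rw [Real.log_exp] at this
    simp only [hL]; linarith
  have hexpL : Real.exp L = x⁻¹ := by
    rw [hL, Real.exp_neg, Real.exp_log hx]
  have hint := besselK_integrand_integrable ν x hx
  have hnonneg : ∀ t : ℝ, 0 ≤ Real.exp (-x * Real.cosh t) * Real.cosh (ν * t) := fun t =>
    mul_nonneg (Real.exp_pos _).le (Real.cosh_pos _).le
  -- pointwise bound on Ioc (L-1) L
  have hptwise : ∀ t ∈ Set.Ioc (L - 1) L,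
      Real.exp (-1) * Real.cosh (ν * (L - 1)) ≤
        Real.exp (-x * Real.cosh t) * Real.cosh (ν * t) := by
    intro t ht
    have ht0 : 0 ≤ t := le_trans (by linarith) ht.1.le
    have hcosh : Real.cosh t ≤ x⁻¹ := by
      calc Real.cosh t ≤ Real.exp |t| := cosh_le_exp_abs t
        _ ≤ Real.exp L := Real.exp_le_exp.2 (by rw [abs_of_nonneg ht0]; exact ht.2)
        _ = x⁻¹ := hexpL
    have h1 : Real.exp (-1) ≤ Real.exp (-x * Real.cosh t) := by
      apply Real.exp_le_exp.2
      have : x * Real.cosh t ≤ 1 := by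
        calc x * Real.cosh t ≤ x * x⁻¹ := by
              exact mul_le_mul_of_nonneg_left hcosh hx.le
          _ = 1 := mul_inv_cancel₀ hx.ne'
      linarith
    have h2 : Real.cosh (ν * (L - 1)) ≤ Real.cosh (ν * t) := by
      apply Real.cosh_le_cosh.2
      rw [abs_mul, abs_mul]
      apply mul_le_mul_of_nonneg_left _ (abs_nonneg ν)
      rw [abs_of_nonneg (by linarith : (0:ℝ) ≤ L - 1), abs_of_nonneg ht0]
      exact ht.1.le
    exact mul_le_mul h1 h2 (Real.cosh_pos _).le (Real.exp_pos _).le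
  have hsub : Set.Ioc (L - 1) L ⊆ Set.Ioi (0:ℝ) := fun t ht =>
    lt_of_le_of_lt (by linarith : (0:ℝ) ≤ L - 1) ht.1
  have step1 : ∫ t in Set.Ioc (L - 1) L, Real.exp (-x * Real.cosh t) * Real.cosh (ν * t) ≤
      besselK ν x := by
    apply setIntegral_mono_set hint
    · filter_upwards with t using hnonneg t
    · exact HasSubset.Subset.eventuallyLE hsub
  have hμ : (volume (Set.Ioc (L - 1) L)).toReal = 1 := by
    rw [Real.volume_Ioc, ENNReal.toReal_ofReal (by linarith)]
    ring
  have step2 : Real.exp (-1) * Real.cosh (ν * (L - 1)) ≤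
      ∫ t in Set.Ioc (L - 1) L, Real.exp (-x * Real.cosh t) * Real.cosh (ν * t) := by
    have := setIntegral_ge_of_const_le (μ := volume) measurableSet_Ioc
      (by rw [Real.volume_Ioc]; exact ENNReal.ofReal_ne_top) hptwise
      (hint.mono_set hsub)
    rwa [measureReal_def, hμ, one_smul] at this
  have step3 : Real.exp (-1 - |ν|) / 2 * x ^ (-|ν|) ≤
      Real.exp (-1) * Real.cosh (ν * (L - 1)) := by
    have h4 : Real.exp (|ν| * (L - 1)) / 2 ≤ Real.cosh (ν * (L - 1)) := by
      have := exp_abs_div_two_le_cosh (ν * (L - 1))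
      rwa [abs_mul, abs_of_nonneg (by linarith : (0:ℝ) ≤ L - 1)] at this
    have h5 : x ^ (-|ν|) = Real.exp (|ν| * L) := by
      rw [Real.rpow_def_of_pos hx]
      congr 1
      rw [hL]; ring
    have h6 : Real.exp (-1 - |ν|) * Real.exp (|ν| * L) = Real.exp (-1) * Real.exp (|ν| * (L - 1)) := by
      rw [← Real.exp_add, ← Real.exp_add]
      congr 1; ring
    calc Real.exp (-1 - |ν|) / 2 * x ^ (-|ν|)
        = Real.exp (-1) * (Real.exp (|ν| * (L - 1)) / 2) := by rw [h5]; nlinarith [h6]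
      _ ≤ Real.exp (-1) * Real.cosh (ν * (L - 1)) :=
          mul_le_mul_of_nonneg_left h4 (Real.exp_pos _).le
  linarith

lemma besselK_measurable (ν : ℝ) : Measurable (besselK ν) := by
  have hc : Continuous (fun p : ℝ × ℝ => Real.exp (-p.1 * Real.cosh p.2) * Real.cosh (ν * p.2)) := by
    continuity
  exact (hc.stronglyMeasurable.integral_prod_right').measurable

lemma vgPDF_measurable (m α β : ℝ) : Measurable (vgPDF m α β) := by
  unfold vgPDF
  apply Measurable.mul
  · apply Measurable.mul
    · exact (Real.measurable_exp.comp (measurable_const.mul measurable_id)).const_mul _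
    · fun_prop
  · exact (besselK_measurable m).comp (measurable_abs.const_mul α)

lemma vgPDF_lower (n α β : ℝ) (hn : n > -1/2) (hβ : |β| < α) :
    ∃ δ : ℝ, 0 < δ ∧ δ ≤ 1 ∧ ∃ c : ℝ, 0 < c ∧
      ∀ y ∈ Set.Ioo (0:ℝ) δ, c * y ^ (n - |n|) ≤ vgPDF n α β y := by
  have hα : 0 < α := lt_of_le_of_lt (abs_nonneg β) hβ
  set M : ℝ := (Real.sqrt (α^2 - β^2)) ^ (2*n+1) /
      (Real.sqrt π * (2*α) ^ n * Real.Gamma (n + 1/2)) with hM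
  have hβsq : β ^ 2 < α ^ 2 := by
    have := abs_nonneg β
    nlinarith [sq_abs β]
  have hMpos : 0 < M := by
    rw [hM]
    have h1 : 0 < Real.sqrt (α^2 - β^2) := Real.sqrt_pos.2 (by linarith)
    have h2 : 0 < Real.Gamma (n + 1/2) := Real.Gamma_pos_of_pos (by linarith)
    have h3 : 0 < Real.sqrt π := Real.sqrt_pos.2 Real.pi_pos
    have h4 : (0:ℝ) < 2*α := by linarith
    positivity
  refine ⟨min 1 (Real.exp (-1) / α), lt_min one_pos (by positivity), min_le_left _ _,
    M * Real.exp (-|β|) * (Real.exp (-1 - |n|) / 2 * α ^ (-|n|)), by positivity, ?_⟩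
  intro y hy
  obtain ⟨hy0, hyδ⟩ := hy
  have hy1 : y ≤ 1 := le_of_lt (lt_of_lt_of_le hyδ (min_le_left _ _))
  have hyα : α * y ≤ Real.exp (-1) := by
    have : y < Real.exp (-1) / α := lt_of_lt_of_le hyδ (min_le_right _ _)
    rw [lt_div_iff₀ hα] at this
    linarith
  have habs : |y| = y := abs_of_pos hy0
  have hexp : Real.exp (-|β|) ≤ Real.exp (β * y) := by
    apply Real.exp_le_exp.2
    have h1 : -|β| * y ≤ β * y := mul_le_mul_of_nonneg_right (neg_abs_le β) hy0.le
    nlinarith [abs_nonneg β]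
  have hbk : Real.exp (-1 - |n|) / 2 * (α * y) ^ (-|n|) ≤ besselK n (α * y) :=
    besselK_lower n (by positivity) hyα
  have hrw : (α * y) ^ (-|n|) = α ^ (-|n|) * y ^ (-|n|) := Real.mul_rpow hα.le hy0.le
  have hysplit : y ^ (n - |n|) = y ^ n * y ^ (-|n|) := by
    rw [← Real.rpow_add hy0]; ring_nf
  show _ ≤ vgPDF n α β y
  unfold vgPDF
  rw [habs, ← hM]
  calc M * Real.exp (-|β|) * (Real.exp (-1 - |n|) / 2 * α ^ (-|n|)) * y ^ (n - |n|)
      = M * Real.exp (-|β|) * y ^ n * (Real.exp (-1 - |n|) / 2 * (α * y) ^ (-|n|)) := by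
        rw [hrw, hysplit]; ring
    _ ≤ M * Real.exp (β * y) * y ^ n * besselK n (α * y) := by
        have h0 : (0:ℝ) ≤ y ^ n := Real.rpow_nonneg hy0.le n
        have h1 : (0:ℝ) ≤ Real.exp (-1 - |n|) / 2 * (α * y) ^ (-|n|) := by positivity
        have := mul_le_mul (mul_le_mul (mul_le_mul_of_nonneg_left hexp hMpos.le)
          (le_refl (y ^ n)) h0 (by positivity)) hbk h1 (by positivity)
        exact this

/-- A measurable `ℝ≥0∞`-valued function positive on `Ioo 0 δ` has nonzero set integral. -/
lemma lintegral_ne_zero_of_pos_on {f : ℝ → ENNReal} (hf : Measurable f) {δ : ℝ} (hδ : 0 < δ)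
    (h : ∀ y ∈ Set.Ioo (0:ℝ) δ, f y ≠ 0) : ∫⁻ y in Set.Ioo (0:ℝ) δ, f y ≠ 0 := by
  intro h0
  rw [lintegral_eq_zero_iff hf] at h0
  rw [Filter.EventuallyEq, ae_restrict_iff' measurableSet_Ioo] at h0
  have hnull : volume {y : ℝ | ¬ (y ∈ Set.Ioo (0:ℝ) δ → f y = 0)} = 0 := ae_iff.mp h0
  have hsub : Set.Ioo (0:ℝ) δ ⊆ {y : ℝ | ¬ (y ∈ Set.Ioo (0:ℝ) δ → f y = 0)} := by
    intro y hy
    simp only [Set.mem_setOf_eq, Classical.not_imp]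
    exact ⟨hy, h y hy⟩
  have := measure_mono_null hsub hnull
  rw [Real.volume_Ioo, sub_zero] at this
  exact absurd this (by simp [hδ.not_ge, ENNReal.ofReal_eq_zero])

lemma lintegral_rpow_Ioo_top {δ q : ℝ} (hδ : 0 < δ) (hq : q ≤ -1) :
    ∫⁻ y in Set.Ioo (0:ℝ) δ, ENNReal.ofReal (y ^ q) = ⊤ := by
  by_contra hfin
  have hmeas : Measurable fun y : ℝ => y ^ q := by fun_prop
  have hint : IntegrableOn (fun y : ℝ => y ^ q) (Set.Ioo 0 δ) := by
    constructor
    · exact hmeas.aestronglyMeasurable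
    · rw [hasFiniteIntegral_iff_ofReal]
      · exact lt_top_iff_ne_top.2 hfin
      · rw [Filter.EventuallyLE, ae_restrict_iff' measurableSet_Ioo]
        filter_upwards with y hy
        exact Real.rpow_nonneg hy.1.le q
  rw [intervalIntegral.integrableOn_Ioo_rpow_iff hδ] at hint
  linarith

lemma lintegral_inv_mul_vgPDF_top (n α β : ℝ) (hn : n > -1/2) (hβ : |β| < α) :
    ∫⁻ y, ENNReal.ofReal (vgPDF n α β y) * ENNReal.ofReal |y|⁻¹ = ⊤ := by
  obtain ⟨δ, hδ, hδ1, c, hc, hlow⟩ := vgPDF_lower n α β hn hβ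
  rw [eq_top_iff]
  calc (⊤ : ENNReal) = ∫⁻ y in Set.Ioo (0:ℝ) δ,
        ENNReal.ofReal c * ENNReal.ofReal (y ^ (n - |n| - 1)) := by
        rw [lintegral_const_mul _ (by fun_prop), lintegral_rpow_Ioo_top hδ
          (by nlinarith [le_abs_self n]), ENNReal.mul_top (by simpa [ENNReal.ofReal_eq_zero] using hc.not_ge)]
    _ ≤ ∫⁻ y in Set.Ioo (0:ℝ) δ, ENNReal.ofReal (vgPDF n α β y) * ENNReal.ofReal |y|⁻¹ := by
        apply setLIntegral_mono' measurableSet_Ioo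
        intro y hy
        have hy0 := hy.1
        rw [← ENNReal.ofReal_mul hc.le, ← ENNReal.ofReal_mul
          (le_trans (by positivity) (hlow y hy))]
        apply ENNReal.ofReal_le_ofReal
        have h1 : c * y ^ (n - |n| - 1) = (c * y ^ (n - |n|)) * y⁻¹ := by
          rw [show n - |n| - 1 = n - |n| + (-1) by ring, Real.rpow_add hy0,
            Real.rpow_neg_one]
          ring
        rw [h1, abs_of_pos hy0]
        exact mul_le_mul_of_nonneg_right (hlow y hy) (by positivity)
    _ ≤ _ := setLIntegral_le_lintegral _ _

lemma vgPDF_pos_on (n α β : ℝ) (hn : n > -1/2) (hβ : |β| < α) :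
    ∃ δ : ℝ, 0 < δ ∧ ∀ y ∈ Set.Ioo (0:ℝ) δ, 0 < vgPDF n α β y := by
  obtain ⟨δ, hδ, _, c, hc, hlow⟩ := vgPDF_lower n α β hn hβ
  exact ⟨δ, hδ, fun y hy => lt_of_lt_of_le
    (by have := hy.1; positivity) (hlow y hy)⟩

lemma withDensity_vgPDF_ne_zero (n α β : ℝ) (hn : n > -1/2) (hβ : |β| < α) :
    (volume.withDensity fun y => ENNReal.ofReal (vgPDF n α β y)) ≠ 0 := by
  obtain ⟨δ, hδ, hpos⟩ := vgPDF_pos_on n α β hn hβ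
  intro h0
  have h1 : (volume.withDensity fun y => ENNReal.ofReal (vgPDF n α β y)) (Set.Ioo 0 δ) = 0 := by
    rw [h0]; rfl
  rw [withDensity_apply _ measurableSet_Ioo] at h1
  exact lintegral_ne_zero_of_pos_on (by exact (vgPDF_measurable n α β).ennreal_ofReal) hδ
    (fun y hy => by simp [ENNReal.ofReal_eq_zero, (hpos y hy).not_ge]) h1

theorem vg_ratio_mean_undefined {Ω : Type*} [MeasurableSpace Ω] (μ : Measure Ω)
    [IsProbabilityMeasure μ] (X Y : Ω → ℝ) (m n α₁ α₂ β₁ β₂ : ℝ)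
    (hm : m > -1/2) (hn : n > -1/2) (hβ₁ : |β₁| < α₁) (hβ₂ : |β₂| < α₂)
    (hX : Measure.map X μ = volume.withDensity fun x => ENNReal.ofReal (vgPDF m α₁ β₁ x))
    (hY : Measure.map Y μ = volume.withDensity fun y => ENNReal.ofReal (vgPDF n α₂ β₂ y))
    (hInd : IndepFun X Y μ) :
    ∫⁻ ω, ENNReal.ofReal |X ω / Y ω| ∂μ = ⊤ := by
  have hXae : AEMeasurable X μ := by
    by_contra h
    rw [Measure.map_of_not_aemeasurable h] at hX
    exact withDensity_vgPDF_ne_zero m α₁ β₁ hm hβ₁ hX.symm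
  have hYae : AEMeasurable Y μ := by
    by_contra h
    rw [Measure.map_of_not_aemeasurable h] at hY
    exact withDensity_vgPDF_ne_zero n α₂ β₂ hn hβ₂ hY.symm
  set φ : ℝ → ENNReal := fun x => ENNReal.ofReal |x| with hφ
  set ψ : ℝ → ENNReal := fun y => ENNReal.ofReal |y|⁻¹ with hψ
  have hφm : Measurable φ := measurable_abs.ennreal_ofReal
  have hψm : Measurable ψ := (measurable_abs.inv).ennreal_ofReal
  have hsplit : ∫⁻ ω, ENNReal.ofReal |X ω / Y ω| ∂μ =
      (∫⁻ ω, φ (X ω) ∂μ) * ∫⁻ ω, ψ (Y ω) ∂μ := by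
    have hpt : ∀ ω, ENNReal.ofReal |X ω / Y ω| = φ (X ω) * ψ (Y ω) := by
      intro ω
      rw [hφ, hψ]
      rw [div_eq_mul_inv, abs_mul, abs_inv, ENNReal.ofReal_mul (abs_nonneg _)]
    simp_rw [hpt]
    exact lintegral_mul_eq_lintegral_mul_lintegral_of_indepFun''
      (hφm.comp_aemeasurable hXae) (hψm.comp_aemeasurable hYae) (hInd.comp hφm hψm)
  rw [hsplit]
  have hE : ∫⁻ ω, φ (X ω) ∂μ =
      ∫⁻ x, ENNReal.ofReal (vgPDF m α₁ β₁ x) * φ x := by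
    rw [← lintegral_map' hφm.aemeasurable hXae, hX,
      lintegral_withDensity_eq_lintegral_mul volume
        (vgPDF_measurable m α₁ β₁).ennreal_ofReal hφm]
    rfl
  have hF : ∫⁻ ω, ψ (Y ω) ∂μ = ⊤ := by
    rw [← lintegral_map' hψm.aemeasurable hYae, hY,
      lintegral_withDensity_eq_lintegral_mul volume
        (vgPDF_measurable n α₂ β₂).ennreal_ofReal hψm]
    exact lintegral_inv_mul_vgPDF_top n α₂ β₂ hn hβ₂
  rw [hF]
  apply ENNReal.mul_eq_top.2
  left
  refine ⟨?_, rfl⟩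
  rw [hE]
  obtain ⟨δ, hδ, hpos⟩ := vgPDF_pos_on m α₁ β₁ hm hβ₁
  have hne : ∫⁻ x in Set.Ioo (0:ℝ) δ, ENNReal.ofReal (vgPDF m α₁ β₁ x) * φ x ≠ 0 := by
    apply lintegral_ne_zero_of_pos_on
      ((vgPDF_measurable m α₁ β₁).ennreal_ofReal.mul hφm) hδ
    intro y hy
    simp only [Pi.mul_apply]
    apply mul_ne_zero
    · simp [ENNReal.ofReal_eq_zero, (hpos y hy).not_ge]
    · rw [hφ]
      simp only [ne_eq, ENNReal.ofReal_eq_zero, not_le]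
      exact abs_pos.2 hy.1.ne'
  intro h0
  exact hne (le_antisymm (h0 ▸ setLIntegral_le_lintegral _ _) zero_le)
end

section
/- For real numbers a, b, c with c − a − b > 0 and c not a nonpositive integer, the Gaussian hypergeometric function satisfies ₂F₁(a, b; c; 1) = Γ(c)Γ(c−a−b) / (Γ(c−a)Γ(c−b)) (Gauss's summation theorem), i.e. the series Σ_{j=0}^∞ (a)_j(b)_j/((c)_j j!) converges to this value. -/
open Real

/-- Ascending factorial (Pochhammer symbol). -/
noncomputable def asc (u : ℝ) (j : ℕ) : ℝ := ∏ i ∈ Finset.range j, (u + i)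

namespace GaussAux

open Filter Topology

noncomputable def T (a b c : ℝ) (j : ℕ) : ℝ :=
  asc a j * asc b j / (asc c j * (Nat.factorial j : ℝ))

lemma asc_zero (u : ℝ) : asc u 0 = 1 := by simp [asc]

lemma asc_succ (u : ℝ) (j : ℕ) : asc u (j + 1) = asc u j * (u + j) := by
  simp [asc, Finset.prod_range_succ]

lemma asc_ne_zero {u : ℝ} (h : ∀ i : ℕ, u + (i : ℝ) ≠ 0) (j : ℕ) : asc u j ≠ 0 := by
  rw [asc, Finset.prod_ne_zero_iff]
  exact fun i _ => h i

lemma asc_pos {u : ℝ} (h : 0 < u) (j : ℕ) : 0 < asc u j := by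
  rw [asc]
  exact Finset.prod_pos fun i _ => by positivity

lemma asc_eq_zero {u : ℝ} {i j : ℕ} (hij : i < j) (h : u + (i : ℝ) = 0) : asc u j = 0 :=
  Finset.prod_eq_zero (Finset.mem_range.2 hij) h

lemma abs_asc_le {u K : ℝ} (h : |u| ≤ K) (j : ℕ) : |asc u j| ≤ asc K j := by
  rw [asc, asc, Finset.abs_prod]
  refine Finset.prod_le_prod (fun i _ => abs_nonneg _) fun i _ => ?_
  calc |u + (i : ℝ)| ≤ |u| + (i : ℝ) := by
        refine (abs_add_le _ _).trans ?_
        simp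
    _ ≤ K + i := by linarith

lemma asc_le_asc {u v : ℝ} (hu : 0 ≤ u) (huv : u ≤ v) (j : ℕ) : asc u j ≤ asc v j := by
  rw [asc, asc]
  refine Finset.prod_le_prod (fun i _ => by positivity) fun i _ => by linarith

lemma asc_shift (u : ℝ) (j : ℕ) : asc u j * (u + j) = u * asc (u + 1) j := by
  induction j with
  | zero => simp [asc_zero]
  | succ j ih =>
      rw [asc_succ, asc_succ]
      push_cast
      linear_combination (u + (j:ℝ) + 1) * ih

lemma le_asc_succ {u : ℝ} (hu : 1 ≤ u) (j : ℕ) : u ≤ asc u (j + 1) := by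
  induction j with
  | zero => simp [asc_succ, asc_zero]
  | succ j ih =>
      rw [asc_succ]
      have hj : (0:ℝ) ≤ (j:ℝ) + 1 := by positivity
      nlinarith [ih]

lemma T_zero (a b c : ℝ) : T a b c 0 = 1 := by simp [T, asc_zero]

lemma T_succ (a b c : ℝ) (j : ℕ) (hX : asc c j ≠ 0) (hcj : c + (j : ℝ) ≠ 0) :
    T a b c (j + 1) = T a b c j * ((a + j) * (b + j) / ((c + j) * (j + 1))) := by
  have hf : ((Nat.factorial j : ℝ)) ≠ 0 := Nat.cast_ne_zero.2 (Nat.factorial_ne_zero j)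
  rw [T, T, asc_succ, asc_succ, asc_succ, Nat.factorial_succ]
  push_cast
  field_simp

set_option maxHeartbeats 1000000 in
lemma tail (a b c θ : ℝ) (hθ1 : 1 < θ) (hθ2 : θ < 1 + (c - a - b))
    (hc : ∀ j : ℕ, c + (j : ℝ) ≠ 0) :
    ∃ N : ℕ, ∀ k : ℕ,
      |T a b c (N + k)| ≤ |T a b c N| * (((N : ℝ) + 1) / ((N : ℝ) + 1 + k)) ^ θ := by
  have hε : 0 < 1 + (c - a - b) - θ := by linarith
  obtain ⟨N, hN⟩ := exists_nat_ge (max (1 + |a| + |b| + |c|)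
      (max ((|c - a * b + (c + 1) * (2 - θ) - 2 * (a + b)|) / (2 * (1 + (c - a - b) - θ)))
        ((1 + |c + (2 - θ) * (c + 1) - a * b - 2 * (a + b)| + |(2 - θ) * c - 2 * a * b|) /
          (1 + (c - a - b) - θ))))
  have hN0 : (1 + |a| + |b| + |c| : ℝ) ≤ N := le_trans (le_max_left _ _) hN
  have hN1 : (|c - a * b + (c + 1) * (2 - θ) - 2 * (a + b)|) / (2 * (1 + (c - a - b) - θ)) ≤ N :=
    le_trans (le_trans (le_max_left _ _) (le_max_right _ _)) hN
  have hN2 : (1 + |c + (2 - θ) * (c + 1) - a * b - 2 * (a + b)| + |(2 - θ) * c - 2 * a * b|) /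
      (1 + (c - a - b) - θ) ≤ N :=
    le_trans (le_trans (le_max_right _ _) (le_max_right _ _)) hN
  have ha1 : 1 ≤ a + N := by
    have := neg_abs_le a; have := abs_nonneg b; have := abs_nonneg c; linarith
  have hb1 : 1 ≤ b + N := by
    have := neg_abs_le b; have := abs_nonneg a; have := abs_nonneg c; linarith
  have hc1 : 1 ≤ c + N := by
    have := neg_abs_le c; have := abs_nonneg a; have := abs_nonneg b; linarith
  have hNnn : (0:ℝ) ≤ N := Nat.cast_nonneg N
  have hNge1 : (1:ℝ) ≤ N := by
    have := abs_nonneg a; have := abs_nonneg b; have := abs_nonneg c; linarith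
  have hq1 : 0 ≤ 2 * (1 + (c - a - b) - θ) * N + (c - a * b + (c + 1) * (2 - θ) - 2 * (a + b)) := by
    have h1 := (div_le_iff₀ (by positivity : (0:ℝ) < 2 * (1 + (c - a - b) - θ))).1 hN1
    have := neg_abs_le (c - a * b + (c + 1) * (2 - θ) - 2 * (a + b))
    nlinarith
  have hq0 : 0 ≤ (1 + (c - a - b) - θ) * ((N:ℝ) * N)
      + (c + (2 - θ) * (c + 1) - a * b - 2 * (a + b)) * N + ((2 - θ) * c - 2 * a * b) := by
    have h1 := (div_le_iff₀ hε).1 hN2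
    have e1 : (1 + |c + (2 - θ) * (c + 1) - a * b - 2 * (a + b)| + |(2 - θ) * c - 2 * a * b|) * N
        ≤ ((1 + (c - a - b) - θ) * N) * N := by
      refine mul_le_mul_of_nonneg_right ?_ hNnn
      linarith
    have e2 := mul_le_mul_of_nonneg_right
      (neg_abs_le (c + (2 - θ) * (c + 1) - a * b - 2 * (a + b))) hNnn
    have e3 := mul_le_mul_of_nonneg_left hNge1
      (abs_nonneg ((2 - θ) * c - 2 * a * b))
    have := neg_abs_le ((2 - θ) * c - 2 * a * b)
    nlinarith
  have key : ∀ x : ℝ, 0 ≤ x →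
      (a + ((N:ℝ) + x)) * (b + ((N:ℝ) + x)) * (((N:ℝ) + 1 + x) + 1)
        ≤ (c + ((N:ℝ) + x)) * ((N:ℝ) + 1 + x) * (((N:ℝ) + 1 + x) + 1 - θ) := by
    intro x hx
    have hq1x : 0 ≤ (2 * (1 + (c - a - b) - θ) * N
        + (c - a * b + (c + 1) * (2 - θ) - 2 * (a + b))) * x := mul_nonneg hq1 hx
    have hq2x : 0 ≤ (1 + (c - a - b) - θ) * (x * x) := by positivity
    linarith [hq0, hq1x, hq2x]
  have hstep : ∀ k : ℕ, |T a b c (N + k + 1)|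
      ≤ |T a b c (N + k)| * (((N:ℝ) + 1 + k) / ((N:ℝ) + 1 + k + 1)) ^ θ := by
    intro k
    have hxk : (0:ℝ) ≤ (k:ℝ) := Nat.cast_nonneg k
    have hcast : ((N + k : ℕ) : ℝ) = (N:ℝ) + k := by push_cast; ring
    have haj : (0:ℝ) < a + ((N:ℝ) + k) := by linarith
    have hbj : (0:ℝ) < b + ((N:ℝ) + k) := by linarith
    have hcj : (0:ℝ) < c + ((N:ℝ) + k) := by linarith
    have hs : (0:ℝ) < (N:ℝ) + 1 + k := by linarith
    have hs1 : (0:ℝ) < (N:ℝ) + 1 + k + 1 := by linarith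
    have hTs := T_succ a b c (N + k) (asc_ne_zero hc _) (by rw [hcast]; exact ne_of_gt hcj)
    have hratio_nonneg : 0 ≤ (a + ((N:ℝ)+k)) * (b + ((N:ℝ)+k)) / ((c + ((N:ℝ)+k)) * ((N:ℝ)+k+1)) := by
      positivity
    have habs : |T a b c (N + k + 1)| = |T a b c (N + k)| *
        ((a + ((N:ℝ)+k)) * (b + ((N:ℝ)+k)) / ((c + ((N:ℝ)+k)) * ((N:ℝ)+k+1))) := by
      rw [hTs, hcast, abs_mul, abs_of_nonneg hratio_nonneg]
    have r1 : (a + ((N:ℝ)+k)) * (b + ((N:ℝ)+k)) / ((c + ((N:ℝ)+k)) * ((N:ℝ)+k+1))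
        ≤ (((N:ℝ) + 1 + k) + 1 - θ) / (((N:ℝ) + 1 + k) + 1) := by
      rw [div_le_div_iff₀ (by nlinarith) (by linarith)]
      linarith [key (k:ℝ) hxk]
    have r2 : (((N:ℝ) + 1 + k) + 1 - θ) / (((N:ℝ) + 1 + k) + 1)
        ≤ (((N:ℝ) + 1 + k) / ((N:ℝ) + 1 + k + 1)) ^ θ := by
      have hb1 : -1 ≤ -(1 / (((N:ℝ) + 1 + k) + 1)) := by
        rw [neg_le_neg_iff]
        rw [div_le_one hs1]; linarith
      have hber := one_add_mul_self_le_rpow_one_add hb1 hθ1.le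
      have e1 : 1 + -(1 / (((N:ℝ) + 1 + k) + 1)) = ((N:ℝ) + 1 + k) / ((N:ℝ) + 1 + k + 1) := by
        field_simp
        ring
      have e2 : (((N:ℝ) + 1 + k) + 1 - θ) / (((N:ℝ) + 1 + k) + 1)
          ≤ 1 + θ * -(1 / (((N:ℝ) + 1 + k) + 1)) := by
        rw [div_le_iff₀ hs1]; field_simp
        linarith
      calc (((N:ℝ) + 1 + k) + 1 - θ) / (((N:ℝ) + 1 + k) + 1)
          ≤ 1 + θ * -(1 / (((N:ℝ) + 1 + k) + 1)) := e2
        _ ≤ (1 + -(1 / (((N:ℝ) + 1 + k) + 1))) ^ θ := hber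
        _ = (((N:ℝ) + 1 + k) / ((N:ℝ) + 1 + k + 1)) ^ θ := by rw [e1]
    rw [habs]
    exact mul_le_mul_of_nonneg_left (r1.trans r2) (abs_nonneg _)
  refine ⟨N, fun k => ?_⟩
  induction k with
  | zero =>
      have : ((N:ℝ) + 1) / ((N:ℝ) + 1 + (0:ℕ)) = 1 := by
        push_cast; rw [add_zero, div_self]; positivity
      rw [this, Real.one_rpow]
      simp
  | succ k ih =>
      have hidx : N + (k + 1) = N + k + 1 := rfl
      have hs : (0:ℝ) < (N:ℝ) + 1 + k := by positivity
      have hs1 : (0:ℝ) < (N:ℝ) + 1 + k + 1 := by positivity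
      calc |T a b c (N + (k+1))| ≤ |T a b c (N + k)| * (((N:ℝ) + 1 + k) / ((N:ℝ) + 1 + k + 1)) ^ θ := by
            rw [hidx]; exact hstep k
        _ ≤ (|T a b c N| * (((N:ℝ) + 1) / ((N:ℝ) + 1 + k)) ^ θ)
              * (((N:ℝ) + 1 + k) / ((N:ℝ) + 1 + k + 1)) ^ θ :=
            mul_le_mul_of_nonneg_right ih (Real.rpow_nonneg (by positivity) θ)
        _ = |T a b c N| * (((N:ℝ) + 1) / ((N:ℝ) + 1 + (k+1:ℕ))) ^ θ := by
            rw [mul_assoc, ← Real.mul_rpow (by positivity) (by positivity)]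
            have heq : ((N:ℝ) + 1) / ((N:ℝ) + 1 + k) * (((N:ℝ) + 1 + k) / ((N:ℝ) + 1 + k + 1))
                = ((N:ℝ) + 1) / ((N:ℝ) + 1 + (k+1:ℕ)) := by
              push_cast
              rw [div_mul_div_comm, div_eq_div_iff (by positivity) (by positivity)]
              ring
            rw [heq]

lemma summable_T (a b c : ℝ) (hδ : 0 < c - a - b) (hc : ∀ j : ℕ, c + (j : ℝ) ≠ 0) :
    Summable (T a b c) := by
  obtain ⟨N, hN⟩ := tail a b c (1 + (c - a - b) / 2) (by linarith) (by linarith) hc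
  rw [← summable_nat_add_iff N]
  have hsum : Summable (fun k : ℕ =>
      (|T a b c N| * ((N:ℝ) + 1) ^ (1 + (c - a - b) / 2)) * ((k:ℝ) + 1) ^ (-(1 + (c - a - b) / 2))) := by
    apply Summable.mul_left
    have h0 : Summable (fun n : ℕ => ((n:ℝ)) ^ (-(1 + (c - a - b) / 2))) :=
      Real.summable_nat_rpow.2 (by linarith)
    have h1 := (summable_nat_add_iff 1).2 h0
    refine h1.congr fun n => ?_
    push_cast
    ring_nf
  refine Summable.of_norm_bounded hsum fun k => ?_
  have h2 : |T a b c (k + N)| ≤ |T a b c N| * (((N:ℝ) + 1) / ((N:ℝ) + 1 + k)) ^ (1 + (c - a - b) / 2) := by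
    rw [add_comm]; exact hN k
  have h3 : (((N:ℝ) + 1) / ((N:ℝ) + 1 + k)) ^ (1 + (c - a - b) / 2)
      = ((N:ℝ) + 1) ^ (1 + (c - a - b) / 2) * ((N:ℝ) + 1 + k) ^ (-(1 + (c - a - b) / 2)) := by
    rw [Real.div_rpow (by positivity) (by positivity), Real.rpow_neg (by positivity), div_eq_mul_inv]
  have h4 : ((N:ℝ) + 1 + k) ^ (-(1 + (c - a - b) / 2)) ≤ ((k:ℝ) + 1) ^ (-(1 + (c - a - b) / 2)) :=
    Real.rpow_le_rpow_of_nonpos (by positivity) (by linarith [Nat.cast_nonneg (α := ℝ) N]) (by linarith)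
  calc ‖T a b c (k + N)‖ ≤ |T a b c N| * (((N:ℝ) + 1) / ((N:ℝ) + 1 + k)) ^ (1 + (c - a - b) / 2) := h2
    _ = |T a b c N| * ((N:ℝ) + 1) ^ (1 + (c - a - b) / 2) * ((N:ℝ) + 1 + k) ^ (-(1 + (c - a - b) / 2)) := by
        rw [h3, mul_assoc]
    _ ≤ |T a b c N| * ((N:ℝ) + 1) ^ (1 + (c - a - b) / 2) * ((k:ℝ) + 1) ^ (-(1 + (c - a - b) / 2)) := by
        refine mul_le_mul_of_nonneg_left h4 (by positivity)

lemma boundary (a b c : ℝ) (hδ : 0 < c - a - b) (hc : ∀ j : ℕ, c + (j : ℝ) ≠ 0) :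
    Tendsto (fun n : ℕ => (n:ℝ) * (c + n) * T a b (c + 1) n) atTop (𝓝 0) := by
  have hc' : ∀ j : ℕ, (c + 1) + (j : ℝ) ≠ 0 := by
    intro j
    have := hc (j + 1)
    push_cast at this
    intro hcon
    exact this (by linarith)
  obtain ⟨N, hN⟩ := tail a b (c + 1) (2 + (c - a - b) / 2) (by linarith) (by linarith) hc'
  apply squeeze_zero_norm'
    (a := fun n : ℕ => (|T a b (c + 1) N| * ((N:ℝ) + 1) ^ (2 + (c - a - b) / 2) * (|c| + 1))
      * ((n:ℝ) + 1) ^ (-(c - a - b) / 2))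
  · filter_upwards [eventually_ge_atTop N] with n hn
    obtain ⟨k, rfl⟩ := Nat.exists_eq_add_of_le hn
    have hcast : ((N + k : ℕ) : ℝ) = (N:ℝ) + k := by push_cast; ring
    have hs : (0:ℝ) < (N:ℝ) + 1 + k := by positivity
    have h2 := hN k
    have h3 : (((N:ℝ) + 1) / ((N:ℝ) + 1 + k)) ^ (2 + (c - a - b) / 2)
        = ((N:ℝ) + 1) ^ (2 + (c - a - b) / 2) * ((N:ℝ) + 1 + k) ^ (-(2 + (c - a - b) / 2)) := by
      rw [Real.div_rpow (by positivity) (by positivity), Real.rpow_neg (by positivity), div_eq_mul_inv]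
    have hb1 : |(N + k : ℕ) * (c + (N + k : ℕ)) * T a b (c + 1) (N + k)|
        ≤ (((N:ℝ) + 1 + k) * ((|c| + 1) * ((N:ℝ) + 1 + k)))
          * (|T a b (c + 1) N| * (((N:ℝ) + 1) / ((N:ℝ) + 1 + k)) ^ (2 + (c - a - b) / 2)) := by
      rw [abs_mul, abs_mul]
      refine mul_le_mul ?_ h2 (abs_nonneg _) (by positivity)
      refine mul_le_mul ?_ ?_ (abs_nonneg _) (by positivity)
      · rw [hcast, abs_of_nonneg (by positivity)]
        linarith
      · rw [hcast]
        calc |c + ((N:ℝ) + k)| ≤ |c| + ((N:ℝ) + k) := by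
              refine (abs_add_le _ _).trans ?_
              simp [abs_of_nonneg (by positivity : (0:ℝ) ≤ (N:ℝ) + k)]
          _ ≤ (|c| + 1) * ((N:ℝ) + 1 + k) := by nlinarith [abs_nonneg c, Nat.cast_nonneg (α := ℝ) N, Nat.cast_nonneg (α := ℝ) k]
    have hb2 : (((N:ℝ) + 1 + k) * ((|c| + 1) * ((N:ℝ) + 1 + k)))
          * (|T a b (c + 1) N| * (((N:ℝ) + 1) / ((N:ℝ) + 1 + k)) ^ (2 + (c - a - b) / 2))
        = (|T a b (c + 1) N| * ((N:ℝ) + 1) ^ (2 + (c - a - b) / 2) * (|c| + 1))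
          * (((N:ℝ) + 1 + k) ^ (2:ℝ) * ((N:ℝ) + 1 + k) ^ (-(2 + (c - a - b) / 2))) := by
      rw [h3]
      rw [show ((N:ℝ) + 1 + k) ^ (2:ℝ) = ((N:ℝ) + 1 + k) * ((N:ℝ) + 1 + k) by
        rw [show (2:ℝ) = ((2:ℕ):ℝ) by norm_num, Real.rpow_natCast]; ring]
      ring
    have hb3 : ((N:ℝ) + 1 + k) ^ (2:ℝ) * ((N:ℝ) + 1 + k) ^ (-(2 + (c - a - b) / 2))
        = ((N:ℝ) + 1 + k) ^ (-(c - a - b) / 2) := by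
      rw [← Real.rpow_add hs]
      congr 1
      ring
    have hb4 : ((N:ℝ) + 1 + k) ^ (-(c - a - b) / 2) ≤ (((N + k : ℕ):ℝ) + 1) ^ (-(c - a - b) / 2) := by
      rw [hcast]
      refine Real.rpow_le_rpow_of_nonpos (by positivity) (by linarith [Nat.cast_nonneg (α := ℝ) k]) (by linarith)
    calc ‖(((N + k : ℕ)):ℝ) * (c + ((N + k : ℕ):ℝ)) * T a b (c + 1) (N + k)‖
        ≤ (((N:ℝ) + 1 + k) * ((|c| + 1) * ((N:ℝ) + 1 + k)))
          * (|T a b (c + 1) N| * (((N:ℝ) + 1) / ((N:ℝ) + 1 + k)) ^ (2 + (c - a - b) / 2)) := hb1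
      _ = (|T a b (c + 1) N| * ((N:ℝ) + 1) ^ (2 + (c - a - b) / 2) * (|c| + 1))
          * (((N:ℝ) + 1 + k) ^ (-(c - a - b) / 2)) := by rw [hb2, hb3]
      _ ≤ (|T a b (c + 1) N| * ((N:ℝ) + 1) ^ (2 + (c - a - b) / 2) * (|c| + 1))
          * ((((N + k : ℕ):ℝ) + 1) ^ (-(c - a - b) / 2)) := by
          refine mul_le_mul_of_nonneg_left hb4 (by positivity)
  · rw [show (0:ℝ) = (|T a b (c + 1) N| * ((N:ℝ) + 1) ^ (2 + (c - a - b) / 2) * (|c| + 1)) * 0 by ring]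
    refine Tendsto.const_mul _ ?_
    have h5 : Tendsto (fun n : ℕ => (n:ℝ) + 1) atTop atTop :=
      tendsto_atTop_add_const_right _ _ tendsto_natCast_atTop_atTop
    have h6 := (tendsto_rpow_neg_atTop (y := (c - a - b) / 2) (by linarith)).comp h5
    refine h6.congr fun n => ?_
    simp only [Function.comp_apply]
    rw [neg_div]

lemma Tc_shift (a b c : ℝ) (j : ℕ) (hc0 : c ≠ 0) (hX : asc c j ≠ 0) (hY : asc (c + 1) j ≠ 0)
    (hcj : c + (j : ℝ) ≠ 0) :
    T a b c j = ((c + j) / c) * T a b (c + 1) j := by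
  have hf : ((Nat.factorial j : ℝ)) ≠ 0 := Nat.cast_ne_zero.2 (Nat.factorial_ne_zero j)
  have hshift := asc_shift c j
  rw [T, T]
  field_simp
  linear_combination (-(asc a j * asc b j)) * hshift

lemma contiguous (a b c : ℝ) (hδ : 0 < c - a - b) (hc : ∀ j : ℕ, c + (j : ℝ) ≠ 0) :
    c * (c - a - b) * ∑' j, T a b c j = (c - a) * (c - b) * ∑' j, T a b (c + 1) j := by
  have hc' : ∀ j : ℕ, (c + 1) + (j : ℝ) ≠ 0 := by
    intro j
    have := hc (j + 1)
    push_cast at this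
    intro hcon
    exact this (by linarith)
  have hS1 := (summable_T a b c hδ hc).hasSum
  have hS2 := (summable_T a b (c + 1) (by linarith) hc').hasSum
  have hd := (hS1.mul_left (c * (c - a - b))).sub (hS2.mul_left ((c - a) * (c - b)))
  have hterm : ∀ j : ℕ, c * (c - a - b) * T a b c j - (c - a) * (c - b) * T a b (c + 1) j
      = (fun j : ℕ => (j : ℝ) * (c + j) * T a b (c + 1) j) j
        - (fun j : ℕ => (j : ℝ) * (c + j) * T a b (c + 1) j) (j + 1) := by
    intro j
    have hc0 : c ≠ 0 := by have := hc 0; simpa using this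
    have hX := asc_ne_zero hc j
    have hY := asc_ne_zero hc' j
    have hcj := hc j
    have hcj1 : (c + 1) + (j : ℝ) ≠ 0 := hc' j
    have hj1 : ((j : ℝ) + 1) ≠ 0 := by positivity
    have hsh := Tc_shift a b c j hc0 hX hY hcj
    have hTs := T_succ a b (c + 1) j hY hcj1
    simp only
    rw [hsh, hTs]
    push_cast
    field_simp
    ring
  have hps : ∀ n : ℕ, ∑ j ∈ Finset.range n,
      (c * (c - a - b) * T a b c j - (c - a) * (c - b) * T a b (c + 1) j)
      = -((n : ℝ) * (c + n) * T a b (c + 1) n) := by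
    intro n
    rw [Finset.sum_congr rfl fun j _ => hterm j, Finset.sum_range_sub']
    simp [T_zero]
  have h1 := hd.tendsto_sum_nat
  have h2 : Tendsto (fun n : ℕ => -((n : ℝ) * (c + n) * T a b (c + 1) n)) atTop
      (𝓝 (c * (c - a - b) * ∑' j, T a b c j - (c - a) * (c - b) * ∑' j, T a b (c + 1) j)) := by
    refine h1.congr fun n => hps n
  have h3 := (boundary a b c hδ hc).neg
  have h4 := tendsto_nhds_unique h2 (by simpa using h3)
  linarith

lemma iterEq (a b c : ℝ) (hδ : 0 < c - a - b) (hc : ∀ j : ℕ, c + (j : ℝ) ≠ 0) (n : ℕ) :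
    asc c n * asc (c - a - b) n * ∑' j, T a b c j
      = asc (c - a) n * asc (c - b) n * ∑' j, T a b (c + n) j := by
  induction n with
  | zero => simp [asc_zero]
  | succ n ih =>
      have hn0 : (0:ℝ) ≤ (n:ℝ) := Nat.cast_nonneg n
      have hδ' : 0 < (c + n) - a - b := by linarith
      have hc'' : ∀ j : ℕ, (c + n) + (j : ℝ) ≠ 0 := by
        intro j
        have := hc (n + j)
        push_cast at this
        intro hcon
        exact this (by linarith)
      have hcont := contiguous a b (c + n) hδ' hc''
      have hrw : c + ((n + 1 : ℕ) : ℝ) = (c + n) + 1 := by push_cast; ring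
      rw [asc_succ, asc_succ, asc_succ, asc_succ, hrw]
      linear_combination ((c + n) * (c - a - b + n)) * ih
        + (asc (c - a) n * asc (c - b) n) * hcont

lemma Flim (a b c : ℝ) (hδ : 0 < c - a - b) (hc : ∀ j : ℕ, c + (j : ℝ) ≠ 0) :
    Tendsto (fun n : ℕ => ∑' j, T a b (c + (n : ℝ)) j) atTop (𝓝 1) := by
  have hK1 : 1 ≤ max (max |a| |b|) 1 := le_max_right _ _
  have haK : |a| ≤ max (max |a| |b|) 1 := le_trans (le_max_left _ _) (le_max_left _ _)
  have hbK : |b| ≤ max (max |a| |b|) 1 := le_trans (le_max_right _ _) (le_max_left _ _)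
  set K : ℝ := max (max |a| |b|) 1 with hKdef
  have hK0 : 0 < K := lt_of_lt_of_le one_pos hK1
  obtain ⟨n₀, hn₀⟩ := exists_nat_gt (2 * K + |c| + 1)
  have hcn₀ : 2 * K + 1 ≤ c + n₀ := by have := neg_abs_le c; linarith
  have hbsum : Summable (fun j : ℕ => T K K (c + n₀) j) := by
    apply summable_T
    · linarith
    · intro j
      have hj : (0:ℝ) ≤ (j:ℝ) := Nat.cast_nonneg j
      have : (0:ℝ) < c + n₀ + j := by linarith
      linarith
  have hconv := tendsto_tsum_of_dominated_convergence (𝓕 := (atTop : Filter ℕ))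
    (f := fun n j => T a b (c + (n:ℝ)) j) (g := fun j : ℕ => if j = 0 then (1:ℝ) else 0)
    (bound := fun j : ℕ => T K K (c + n₀) j) hbsum ?_ ?_
  · have : ∑' j : ℕ, (if j = 0 then (1:ℝ) else 0) = 1 := tsum_ite_eq 0 1
    rwa [this] at hconv
  · -- pointwise convergence
    intro j
    rcases j with _ | k
    · simp only [T_zero, if_pos rfl]
      exact tendsto_const_nhds
    · simp only [Nat.succ_ne_zero, if_neg]
      apply squeeze_zero_norm' (a := fun n : ℕ =>
        (asc K (k + 1) * asc K (k + 1) / (Nat.factorial (k + 1) : ℝ)) * (c + (n:ℝ))⁻¹)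
      · filter_upwards [eventually_ge_atTop n₀] with n hn
        have hnn : (n₀ : ℝ) ≤ (n : ℝ) := Nat.cast_le.2 hn
        have hcn : 1 ≤ c + (n:ℝ) := by linarith
        have hcnpos : 0 < c + (n:ℝ) := by linarith
        have hdpos : 0 < asc (c + (n:ℝ)) (k + 1) := asc_pos (by linarith) _
        have hfpos : (0:ℝ) < (Nat.factorial (k + 1) : ℝ) := by
          exact_mod_cast Nat.factorial_pos (k + 1)
        have hle : c + (n:ℝ) ≤ asc (c + (n:ℝ)) (k + 1) := le_asc_succ hcn k
        have hnum : |asc a (k + 1) * asc b (k + 1)| ≤ asc K (k + 1) * asc K (k + 1) := by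
          rw [abs_mul]
          exact mul_le_mul (abs_asc_le haK _) (abs_asc_le hbK _) (abs_nonneg _)
            (le_of_lt (asc_pos hK0 _))
        have h1 : ‖T a b (c + (n:ℝ)) (k + 1)‖
            = |asc a (k + 1) * asc b (k + 1)| / (asc (c + (n:ℝ)) (k + 1) * (Nat.factorial (k+1) : ℝ)) := by
          rw [T, Real.norm_eq_abs, abs_div, abs_of_pos (mul_pos hdpos hfpos)]
        rw [h1]
        have h2 : |asc a (k + 1) * asc b (k + 1)|
              / (asc (c + (n:ℝ)) (k + 1) * (Nat.factorial (k + 1) : ℝ))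
            ≤ (asc K (k + 1) * asc K (k + 1)) / ((c + (n:ℝ)) * (Nat.factorial (k + 1) : ℝ)) :=
          div_le_div₀ (mul_pos (asc_pos hK0 (k+1)) (asc_pos hK0 (k+1))).le hnum
            (by positivity) (mul_le_mul_of_nonneg_right hle hfpos.le)
        refine h2.trans (le_of_eq ?_)
        rw [← div_eq_mul_inv, div_div, mul_comm (c + (n:ℝ))]
      · have h5 : Tendsto (fun n : ℕ => c + (n:ℝ)) atTop atTop :=
          tendsto_atTop_add_const_left _ _ tendsto_natCast_atTop_atTop
        have h6 := h5.inv_tendsto_atTop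
        rw [show (0:ℝ) = (asc K (k + 1) * asc K (k + 1) / (Nat.factorial (k + 1) : ℝ)) * 0 by ring]
        exact h6.const_mul _
  · -- uniform bound
    filter_upwards [eventually_ge_atTop n₀] with n hn j
    have hnn : (n₀ : ℝ) ≤ (n : ℝ) := Nat.cast_le.2 hn
    have hd0 : 0 < asc (c + (n₀:ℝ)) j := asc_pos (by linarith) _
    have hd1 : asc (c + (n₀:ℝ)) j ≤ asc (c + (n:ℝ)) j := asc_le_asc (by linarith) (by linarith) j
    have hfpos : (0:ℝ) < (Nat.factorial j : ℝ) := by exact_mod_cast Nat.factorial_pos j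
    have hnum : |asc a j * asc b j| ≤ asc K j * asc K j := by
      rw [abs_mul]
      exact mul_le_mul (abs_asc_le haK _) (abs_asc_le hbK _) (abs_nonneg _)
        (le_of_lt (asc_pos hK0 _))
    have h1 : ‖T a b (c + (n:ℝ)) j‖
        = |asc a j * asc b j| / (asc (c + (n:ℝ)) j * (Nat.factorial j : ℝ)) := by
      have : 0 < asc (c + (n:ℝ)) j := asc_pos (by linarith) _
      rw [T, Real.norm_eq_abs, abs_div, abs_of_pos (mul_pos this hfpos)]
    rw [h1, T]
    exact div_le_div₀ (mul_pos (asc_pos hK0 j) (asc_pos hK0 j)).le hnum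
      (mul_pos hd0 hfpos) (mul_le_mul_of_nonneg_right hd1 (le_of_lt hfpos))

lemma GammaSeq_eq (s : ℝ) (n : ℕ) :
    Real.GammaSeq s n = (n:ℝ) ^ s * (Nat.factorial n : ℝ) / asc s (n + 1) := rfl

lemma Qlim (a b c : ℝ) (hδ : 0 < c - a - b) (hc : ∀ j : ℕ, c + (j : ℝ) ≠ 0) :
    Tendsto (fun n : ℕ => asc (c - a) n * asc (c - b) n / (asc c n * asc (c - a - b) n)) atTop
      (𝓝 (Real.Gamma c * Real.Gamma (c - a - b) / (Real.Gamma (c - a) * Real.Gamma (c - b)))) := by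
  have hQG : ∀ n : ℕ, 1 ≤ n →
      asc (c - a) (n + 1) * asc (c - b) (n + 1) / (asc c (n + 1) * asc (c - a - b) (n + 1))
      = Real.GammaSeq c n * Real.GammaSeq (c - a - b) n
        / (Real.GammaSeq (c - a) n * Real.GammaSeq (c - b) n) := by
    intro n hn
    have hnR : (0:ℝ) < n := by exact_mod_cast hn
    have hf : ((Nat.factorial n : ℝ)) ≠ 0 := Nat.cast_ne_zero.2 (Nat.factorial_ne_zero n)
    have hX : asc c (n + 1) ≠ 0 := asc_ne_zero hc _
    have hY : asc (c - a - b) (n + 1) ≠ 0 := ne_of_gt (asc_pos hδ _)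
    rcases eq_or_ne (asc (c - a) (n + 1)) 0 with h0 | hA
    · have hg : Real.GammaSeq (c - a) n = 0 := by rw [GammaSeq_eq, h0, div_zero]
      rw [h0, hg]; simp
    rcases eq_or_ne (asc (c - b) (n + 1)) 0 with h0 | hB
    · have hg : Real.GammaSeq (c - b) n = 0 := by rw [GammaSeq_eq, h0, div_zero]
      rw [h0, hg]; simp
    · have hpow : (n:ℝ) ^ c * (n:ℝ) ^ (c - a - b) = (n:ℝ) ^ (c - a) * (n:ℝ) ^ (c - b) := by
        rw [← Real.rpow_add hnR, ← Real.rpow_add hnR]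
        congr 1
        ring
      have hpc : (n:ℝ) ^ c ≠ 0 := (Real.rpow_pos_of_pos hnR c).ne'
      have hpcab : (n:ℝ) ^ (c - a - b) ≠ 0 := (Real.rpow_pos_of_pos hnR _).ne'
      have hpca : (n:ℝ) ^ (c - a) ≠ 0 := (Real.rpow_pos_of_pos hnR _).ne'
      have hpcb : (n:ℝ) ^ (c - b) ≠ 0 := (Real.rpow_pos_of_pos hnR _).ne'
      rw [GammaSeq_eq, GammaSeq_eq, GammaSeq_eq, GammaSeq_eq]
      field_simp
      linear_combination (-1 : ℝ) * hpow
  rcases eq_or_ne (Real.Gamma (c - a) * Real.Gamma (c - b)) 0 with hG0 | hG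
  · have hval : Real.Gamma c * Real.Gamma (c - a - b)
        / (Real.Gamma (c - a) * Real.Gamma (c - b)) = 0 := by rw [hG0, div_zero]
    rw [hval]
    rcases mul_eq_zero.1 hG0 with h | h
    · obtain ⟨m, hm⟩ := (Real.Gamma_eq_zero_iff _).1 h
      have hev : (fun n : ℕ => asc (c - a) n * asc (c - b) n / (asc c n * asc (c - a - b) n))
          =ᶠ[atTop] fun _ => (0:ℝ) := by
        filter_upwards [eventually_ge_atTop (m + 1)] with n hn
        rw [asc_eq_zero (i := m) (by omega) (by rw [hm]; ring), zero_mul, zero_div]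
      exact (tendsto_congr' hev).2 tendsto_const_nhds
    · obtain ⟨m, hm⟩ := (Real.Gamma_eq_zero_iff _).1 h
      have hev : (fun n : ℕ => asc (c - a) n * asc (c - b) n / (asc c n * asc (c - a - b) n))
          =ᶠ[atTop] fun _ => (0:ℝ) := by
        filter_upwards [eventually_ge_atTop (m + 1)] with n hn
        rw [asc_eq_zero (i := m) (u := c - b) (by omega) (by rw [hm]; ring), mul_zero, zero_div]
      exact (tendsto_congr' hev).2 tendsto_const_nhds
  · have hlim := ((Real.GammaSeq_tendsto_Gamma c).mul
      (Real.GammaSeq_tendsto_Gamma (c - a - b))).div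
      ((Real.GammaSeq_tendsto_Gamma (c - a)).mul (Real.GammaSeq_tendsto_Gamma (c - b))) hG
    have hshift : Tendsto (fun n : ℕ =>
        asc (c - a) (n + 1) * asc (c - b) (n + 1) / (asc c (n + 1) * asc (c - a - b) (n + 1)))
        atTop (𝓝 (Real.Gamma c * Real.Gamma (c - a - b)
          / (Real.Gamma (c - a) * Real.Gamma (c - b)))) := by
      refine Tendsto.congr' ?_ hlim
      filter_upwards [eventually_ge_atTop 1] with n hn
      exact (hQG n hn).symm
    exact (tendsto_add_atTop_iff_nat 1).1 hshift

end GaussAux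

theorem gauss_summation (a b c : ℝ) (h : c - a - b > 0) (hc : ∀ j : ℕ, c ≠ -(j : ℝ)) :
    HasSum (fun j : ℕ => asc a j * asc b j / (asc c j * (Nat.factorial j : ℝ)))
      (Real.Gamma c * Real.Gamma (c-a-b) / (Real.Gamma (c-a) * Real.Gamma (c-b))) := by
  have hc' : ∀ j : ℕ, c + (j : ℝ) ≠ 0 := fun j hj => hc j (by linarith)
  have hsum := GaussAux.summable_T a b c h hc'
  have hhs : HasSum (GaussAux.T a b c) (∑' j, GaussAux.T a b c j) := hsum.hasSum
  have hkey : ∀ n : ℕ, ∑' j, GaussAux.T a b c j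
      = (asc (c - a) n * asc (c - b) n / (asc c n * asc (c - a - b) n))
        * ∑' j, GaussAux.T a b (c + (n : ℝ)) j := by
    intro n
    have hX : asc c n ≠ 0 := GaussAux.asc_ne_zero hc' n
    have hY : asc (c - a - b) n ≠ 0 := ne_of_gt (GaussAux.asc_pos h n)
    have hiter := GaussAux.iterEq a b c h hc' n
    field_simp
    linear_combination hiter
  have h1 := (GaussAux.Qlim a b c h hc').mul (GaussAux.Flim a b c h hc')
  have h2 : (fun n : ℕ => (asc (c - a) n * asc (c - b) n / (asc c n * asc (c - a - b) n))
      * ∑' j, GaussAux.T a b (c + (n : ℝ)) j) = fun _ : ℕ => ∑' j, GaussAux.T a b c j :=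
    funext fun n => (hkey n).symm
  rw [h2] at h1
  have h3 := tendsto_nhds_unique h1 tendsto_const_nhds
  rw [mul_one] at h3
  rw [h3]
  exact hhs
end

section
/- Let a, b, c be real with a + b = c, a, b > 0. Then as x → 1⁻, ₂F₁(a, b; a+b; x) ∼ −(Γ(a+b)/(Γ(a)Γ(b))) log(1−x), i.e. the limit of ₂F₁(a,b;a+b;x) / (−log(1−x)) as x → 1⁻ equals Γ(a+b)/(Γ(a)Γ(b)). -/
open Real Filter

/-- Gaussian hypergeometric function (power series). -/
noncomputable def hyp2F1 (a b c x : ℝ) : ℝ :=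
  ∑' j : ℕ, asc a j * asc b j / (asc c j * (Nat.factorial j : ℝ)) * x ^ j

namespace Hyp2F1Aux

lemma asc_pos {u : ℝ} (hu : 0 < u) (j : ℕ) : 0 < asc u j :=
  Finset.prod_pos fun i _ => by positivity

/-- The coefficient of the hypergeometric series with `c = a + b`. -/
noncomputable def cj (a b : ℝ) (j : ℕ) : ℝ :=
  asc a j * asc b j / (asc (a+b) j * (Nat.factorial j : ℝ))

lemma cj_pos {a b : ℝ} (ha : 0 < a) (hb : 0 < b) (j : ℕ) : 0 < cj a b j := by
  have hab : (0:ℝ) < a + b := by linarith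
  have h4 : (0:ℝ) < (Nat.factorial j : ℝ) := by
    exact_mod_cast j.factorial_pos
  exact div_pos (mul_pos (asc_pos ha j) (asc_pos hb j))
    (mul_pos (asc_pos hab j) h4)

lemma gammaSeq_eq (s : ℝ) (n : ℕ) :
    Real.GammaSeq s n = (n:ℝ) ^ s * (Nat.factorial n : ℝ) / asc s (n+1) := rfl

lemma key_eq {a b : ℝ} (ha : 0 < a) (hb : 0 < b) {n : ℕ} (hn : 1 ≤ n) :
    ((n:ℝ)+1) * cj a b (n+1) =
      Real.GammaSeq (a+b) n / (Real.GammaSeq a n * Real.GammaSeq b n) := by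
  have hab : (0:ℝ) < a + b := by linarith
  have hnp : (0:ℝ) < (n:ℝ) := by exact_mod_cast hn
  rw [gammaSeq_eq, gammaSeq_eq, gammaSeq_eq, cj]
  have h1 := (asc_pos ha (n+1)).ne'
  have h2 := (asc_pos hb (n+1)).ne'
  have h3 := (asc_pos hab (n+1)).ne'
  have hfac : ((Nat.factorial n : ℝ)) ≠ 0 := by
    have : (0:ℝ) < (Nat.factorial n : ℝ) := by exact_mod_cast n.factorial_pos
    exact this.ne'
  have hfac1 : ((Nat.factorial (n+1) : ℝ)) ≠ 0 := by
    have : (0:ℝ) < (Nat.factorial (n+1) : ℝ) := by exact_mod_cast (n+1).factorial_pos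
    exact this.ne'
  have hra : ((n:ℝ) ^ a) ≠ 0 := (Real.rpow_pos_of_pos hnp a).ne'
  have hrb : ((n:ℝ) ^ b) ≠ 0 := (Real.rpow_pos_of_pos hnp b).ne'
  have hrab : (n:ℝ) ^ (a+b) = (n:ℝ) ^ a * (n:ℝ) ^ b := Real.rpow_add hnp a b
  have hfs : (Nat.factorial (n+1) : ℝ) = ((n:ℝ)+1) * (Nat.factorial n : ℝ) := by
    rw [Nat.factorial_succ]; push_cast; ring
  rw [hrab, hfs]
  have hn1 : ((n:ℝ)+1) ≠ 0 := by positivity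
  field_simp

lemma tendsto_n_cj {a b : ℝ} (ha : 0 < a) (hb : 0 < b) :
    Tendsto (fun n : ℕ => (n:ℝ) * cj a b n) atTop
      (nhds (Real.Gamma (a+b) / (Real.Gamma a * Real.Gamma b))) := by
  have hab : (0:ℝ) < a + b := by linarith
  have hden : Real.Gamma a * Real.Gamma b ≠ 0 :=
    (mul_pos (Real.Gamma_pos_of_pos ha) (Real.Gamma_pos_of_pos hb)).ne'
  have h : Tendsto (fun n : ℕ =>
      Real.GammaSeq (a+b) n / (Real.GammaSeq a n * Real.GammaSeq b n)) atTop
      (nhds (Real.Gamma (a+b) / (Real.Gamma a * Real.Gamma b))) :=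
    (Real.GammaSeq_tendsto_Gamma (a+b)).div
      ((Real.GammaSeq_tendsto_Gamma a).mul (Real.GammaSeq_tendsto_Gamma b)) hden
  have h2 : Tendsto (fun n : ℕ => ((n:ℝ)+1) * cj a b (n+1)) atTop
      (nhds (Real.Gamma (a+b) / (Real.Gamma a * Real.Gamma b))) := by
    refine h.congr' ?_
    filter_upwards [eventually_ge_atTop 1] with n hn
    exact (key_eq ha hb hn).symm
  have h3 : Tendsto (fun n : ℕ => (((n+1 : ℕ)):ℝ) * cj a b (n+1)) atTop
      (nhds (Real.Gamma (a+b) / (Real.Gamma a * Real.Gamma b))) := by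
    refine h2.congr fun n => ?_
    push_cast; ring
  exact (tendsto_add_atTop_iff_nat 1).mp h3

lemma tendsto_ratio {a b : ℝ} (ha : 0 < a) (hb : 0 < b) :
    Tendsto (fun n : ℕ => cj a b (n+1) / cj a b n) atTop (nhds 1) := by
  have hab : (0:ℝ) < a + b := by linarith
  have hK : (0:ℝ) < Real.Gamma (a+b) / (Real.Gamma a * Real.Gamma b) :=
    div_pos (Real.Gamma_pos_of_pos hab)
      (mul_pos (Real.Gamma_pos_of_pos ha) (Real.Gamma_pos_of_pos hb))
  have ht := tendsto_n_cj ha hb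
  have hshift : Tendsto (fun n : ℕ => (((n+1 : ℕ)):ℝ) * cj a b (n+1)) atTop
      (nhds (Real.Gamma (a+b) / (Real.Gamma a * Real.Gamma b))) :=
    ht.comp (tendsto_add_atTop_nat 1)
  have hquot : Tendsto (fun n : ℕ =>
      ((((n+1 : ℕ)):ℝ) * cj a b (n+1)) / ((n:ℝ) * cj a b n) * ((n:ℝ)/((n:ℝ)+1)))
      atTop (nhds 1) := by
    have h1 : Tendsto (fun n : ℕ =>
        ((((n+1 : ℕ)):ℝ) * cj a b (n+1)) / ((n:ℝ) * cj a b n)) atTop (nhds 1) := by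
      have := hshift.div ht hK.ne'
      rw [div_self hK.ne'] at this; exact this
    have h2 : Tendsto (fun n : ℕ => (n:ℝ)/((n:ℝ)+1)) atTop (nhds 1) :=
      tendsto_natCast_div_add_atTop (1:ℝ)
    simpa using h1.mul h2
  refine hquot.congr' ?_
  filter_upwards [eventually_ge_atTop 1] with n hn
  have hnp : (0:ℝ) < (n:ℝ) := by exact_mod_cast hn
  have hc : cj a b n ≠ 0 := (cj_pos ha hb n).ne'
  have hn1 : ((n:ℝ)+1) ≠ 0 := by positivity
  push_cast
  field_simp

lemma summable_cj {a b : ℝ} (ha : 0 < a) (hb : 0 < b) {x : ℝ}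
    (hx0 : 0 < x) (hx1 : x < 1) :
    Summable (fun j : ℕ => cj a b j * x ^ j) := by
  refine summable_of_ratio_test_tendsto_lt_one hx1 ?_ ?_
  · filter_upwards with n
    exact (mul_pos (cj_pos ha hb n) (pow_pos hx0 n)).ne'
  · have heq : (fun n : ℕ => ‖cj a b (n+1) * x ^ (n+1)‖ / ‖cj a b n * x ^ n‖)
        = fun n : ℕ => (cj a b (n+1) / cj a b n) * x := by
      funext n
      have h1 : (0:ℝ) < cj a b (n+1) * x ^ (n+1) :=
        mul_pos (cj_pos ha hb (n+1)) (pow_pos hx0 (n+1))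
      have h2 : (0:ℝ) < cj a b n * x ^ n :=
        mul_pos (cj_pos ha hb n) (pow_pos hx0 n)
      rw [Real.norm_eq_abs, Real.norm_eq_abs, abs_of_pos h1, abs_of_pos h2]
      have hc : cj a b n ≠ 0 := (cj_pos ha hb n).ne'
      have hxn : x ^ n ≠ 0 := (pow_pos hx0 n).ne'
      rw [pow_succ]
      field_simp
    rw [heq]
    simpa using (tendsto_ratio ha hb).mul_const x

lemma hasSum_neg_log {x : ℝ} (h : |x| < 1) :
    HasSum (fun j : ℕ => x ^ j / (j:ℝ)) (-Real.log (1-x)) := by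
  have h1 := Real.hasSum_pow_div_log_of_abs_lt_one h
  have h2 : HasSum (fun n : ℕ => x ^ (n+1) / (((n+1 : ℕ)):ℝ)) (-Real.log (1-x)) := by
    refine h1.congr_fun fun n => ?_
    push_cast; ring
  have := (hasSum_nat_add_iff (f := fun j : ℕ => x ^ j / (j:ℝ)) 1).mp h2
  simpa using this

set_option maxHeartbeats 2000000 in
theorem main (a b : ℝ) (ha : 0 < a) (hb : 0 < b) :
    Tendsto (fun x => hyp2F1 a b (a+b) x / (-Real.log (1-x)))
      (nhdsWithin 1 (Set.Iio 1))
      (nhds (Real.Gamma (a+b) / (Real.Gamma a * Real.Gamma b))) := by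
  set K := Real.Gamma (a+b) / (Real.Gamma a * Real.Gamma b) with hKdef
  have hab : (0:ℝ) < a + b := by linarith
  have hKpos : 0 < K :=
    div_pos (Real.Gamma_pos_of_pos hab)
      (mul_pos (Real.Gamma_pos_of_pos ha) (Real.Gamma_pos_of_pos hb))
  have htend := tendsto_n_cj ha hb
  -- -log (1-x) → ∞ as x → 1⁻
  have hgtop : Tendsto (fun x : ℝ => -Real.log (1-x)) (nhdsWithin 1 (Set.Iio 1)) atTop := by
    have h1 : Tendsto (fun x : ℝ => 1 - x) (nhdsWithin 1 (Set.Iio 1))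
        (nhdsWithin 0 (Set.Ioi 0)) := by
      rw [tendsto_nhdsWithin_iff]
      constructor
      · have h0 : Tendsto (fun x : ℝ => 1 - x) (nhds 1) (nhds 0) := by
          have h0' := (tendsto_id : Tendsto id (nhds (1:ℝ)) (nhds 1)).const_sub (1:ℝ)
          simpa using h0'
        exact h0.mono_left nhdsWithin_le_nhds
      · filter_upwards [self_mem_nhdsWithin] with x hx
        simp only [Set.mem_Iio] at hx
        simp [Set.mem_Ioi]; linarith
    have h2 : Tendsto (fun x : ℝ => Real.log (1-x)) (nhdsWithin 1 (Set.Iio 1)) atBot :=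
      Real.tendsto_log_nhdsGT_zero.comp h1
    exact tendsto_neg_atBot_atTop.comp h2
  rw [Metric.tendsto_nhds]
  intro ε hε
  -- choose N
  obtain ⟨N₀, hN₀⟩ := Metric.tendsto_atTop.mp htend (ε/2) (by positivity)
  set N := max N₀ 1 with hNdef
  have hN1 : 1 ≤ N := le_max_right _ _
  set C := ∑ j ∈ Finset.range N, |cj a b j - K / (j:ℝ)| with hCdef
  have hC0 : 0 ≤ C := Finset.sum_nonneg fun j _ => abs_nonneg _
  have hxpos : ∀ᶠ x in nhdsWithin (1:ℝ) (Set.Iio 1), (0:ℝ) < x :=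
    (eventually_gt_nhds (by norm_num : (0:ℝ) < 1)).filter_mono nhdsWithin_le_nhds
  filter_upwards [self_mem_nhdsWithin, hxpos,
    hgtop.eventually (eventually_ge_atTop (1 + 2*C/ε))] with x hx1 hx0 hgx
  simp only [Set.mem_Iio] at hx1
  set g := -Real.log (1-x) with hgdef
  have hg1 : (1:ℝ) ≤ g := by
    have : 0 ≤ 2*C/ε := by positivity
    linarith
  have hg0 : (0:ℝ) < g := by linarith
  have habs : |x| < 1 := by rw [abs_of_pos hx0]; exact hx1
  -- HasSum facts
  have hyp_eq : hyp2F1 a b (a+b) x = ∑' j : ℕ, cj a b j * x ^ j := rfl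
  have hf : HasSum (fun j : ℕ => cj a b j * x ^ j) (hyp2F1 a b (a+b) x) := by
    rw [hyp_eq]; exact (summable_cj ha hb hx0 hx1).hasSum
  have hgsum : HasSum (fun j : ℕ => x ^ j / (j:ℝ)) g := hasSum_neg_log habs
  have hdiff : HasSum (fun j : ℕ => cj a b j * x ^ j - K * (x ^ j / (j:ℝ)))
      (hyp2F1 a b (a+b) x - K * g) := hf.sub (hgsum.mul_left K)
  set u : ℕ → ℝ := fun j => cj a b j * x ^ j - K * (x ^ j / (j:ℝ)) with hudef
  have hsplit : ∑ j ∈ Finset.range N, u j + ∑' j, u (j + N)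
      = hyp2F1 a b (a+b) x - K * g := by
    rw [Summable.sum_add_tsum_nat_add N hdiff.summable, hdiff.tsum_eq]
  -- head bound
  have hxj : ∀ j : ℕ, x ^ j ≤ 1 := fun j => pow_le_one₀ hx0.le hx1.le
  have hhead : |∑ j ∈ Finset.range N, u j| ≤ C := by
    refine (Finset.abs_sum_le_sum_abs _ _).trans ?_
    refine Finset.sum_le_sum fun j _ => ?_
    have : u j = (cj a b j - K / (j:ℝ)) * x ^ j := by
      simp only [hudef]; ring
    rw [this, abs_mul, abs_of_pos (pow_pos hx0 j)]
    calc |cj a b j - K / (j:ℝ)| * x ^ j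
        ≤ |cj a b j - K / (j:ℝ)| * 1 := by
          exact mul_le_mul_of_nonneg_left (hxj j) (abs_nonneg _)
      _ = |cj a b j - K / (j:ℝ)| := mul_one _
  -- tail pointwise bound
  have htailpt : ∀ j : ℕ, |u (j + N)| ≤ (ε/2) * (x ^ (j + N) / ((j + N : ℕ):ℝ)) := by
    intro j
    have hjN : N₀ ≤ j + N := le_trans (le_max_left _ _) (Nat.le_add_left N j)
    have hjN1 : 1 ≤ j + N := le_trans hN1 (Nat.le_add_left N j)
    have hnp : (0:ℝ) < ((j + N : ℕ):ℝ) := by exact_mod_cast hjN1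
    have hd := hN₀ (j + N) hjN
    rw [Real.dist_eq] at hd
    have heq : u (j + N) = (((j + N : ℕ):ℝ) * cj a b (j + N) - K) / ((j + N : ℕ):ℝ)
        * x ^ (j + N) := by
      simp only [hudef]
      field_simp
    rw [heq, abs_mul, abs_div, abs_of_pos hnp, abs_of_pos (pow_pos hx0 _)]
    have h2 : |((j + N : ℕ):ℝ) * cj a b (j + N) - K| ≤ ε/2 := by
      rw [hKdef]; exact hd.le
    calc |((j + N : ℕ):ℝ) * cj a b (j + N) - K| / ((j + N : ℕ):ℝ) * x ^ (j + N)
        = |((j + N : ℕ):ℝ) * cj a b (j + N) - K| * (x ^ (j + N) / ((j + N : ℕ):ℝ)) := by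
          ring
      _ ≤ (ε/2) * (x ^ (j + N) / ((j + N : ℕ):ℝ)) :=
          mul_le_mul_of_nonneg_right h2 (by positivity)
  -- tail summabilities
  have hsum_tail_u : Summable (fun j : ℕ => u (j + N)) :=
    (summable_nat_add_iff N).mpr hdiff.summable
  have hsum_tail_d : Summable (fun j : ℕ => x ^ (j + N) / ((j + N : ℕ):ℝ)) :=
    (summable_nat_add_iff N).mpr hgsum.summable
  have htail : |∑' j, u (j + N)| ≤ (ε/2) * g := by
    have habs : Summable (fun j : ℕ => ‖u (j + N)‖) := by
      simpa only [Real.norm_eq_abs] using hsum_tail_u.abs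
    have h1 : ‖∑' j, u (j + N)‖ ≤ ∑' j, ‖u (j + N)‖ := norm_tsum_le_tsum_norm habs
    rw [Real.norm_eq_abs] at h1
    have h2 : ∑' j, ‖u (j + N)‖ ≤ ∑' j, (ε/2) * (x ^ (j + N) / ((j + N : ℕ):ℝ)) := by
      refine Summable.tsum_le_tsum (fun j => ?_) habs (hsum_tail_d.mul_left _)
      rw [Real.norm_eq_abs]; exact htailpt j
    have h3 : ∑' j, (ε/2) * (x ^ (j + N) / ((j + N : ℕ):ℝ))
        = (ε/2) * ∑' j, (x ^ (j + N) / ((j + N : ℕ):ℝ)) := tsum_mul_left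
    have h4 : ∑' j, (x ^ (j + N) / ((j + N : ℕ):ℝ)) ≤ g := by
      have h5 := Summable.sum_add_tsum_nat_add N hgsum.summable
      rw [hgsum.tsum_eq] at h5
      have hhead0 : 0 ≤ ∑ j ∈ Finset.range N, x ^ j / (j:ℝ) :=
        Finset.sum_nonneg fun j _ => by positivity
      linarith
    have h6 : (ε/2) * (∑' j, (x ^ (j + N) / ((j + N : ℕ):ℝ))) ≤ (ε/2) * g :=
      mul_le_mul_of_nonneg_left h4 (by positivity)
    linarith
  -- combine
  have hbound : |hyp2F1 a b (a+b) x - K * g| ≤ C + (ε/2) * g := by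
    rw [← hsplit]
    refine (abs_add_le _ _).trans ?_
    exact add_le_add hhead htail
  rw [Real.dist_eq]
  have hrw : hyp2F1 a b (a+b) x / g - K = (hyp2F1 a b (a+b) x - K * g) / g := by
    field_simp
  rw [hrw, abs_div, abs_of_pos hg0]
  have hCg : C / g < ε/2 := by
    rw [div_lt_iff₀ hg0]
    have h2 : ε * (2*C/ε) = 2*C := by field_simp
    nlinarith [mul_le_mul_of_nonneg_left hgx hε.le]
  calc |hyp2F1 a b (a+b) x - K * g| / g ≤ (C + (ε/2) * g) / g :=
        by gcongr
    _ = C / g + ε/2 := by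
        rw [add_div, mul_div_assoc, div_self hg0.ne', mul_one]
    _ < ε/2 + ε/2 := by linarith
    _ = ε := by ring

end Hyp2F1Aux

theorem hyp2F1_log_asymptotic (a b : ℝ) (ha : 0 < a) (hb : 0 < b) :
    Tendsto (fun x => hyp2F1 a b (a+b) x / (-Real.log (1-x)))
      (nhdsWithin 1 (Set.Iio 1)) (nhds (Real.Gamma (a+b) / (Real.Gamma a * Real.Gamma b))) := by
  exact Hyp2F1Aux.main a b ha hb
end

section
/- Let a, b, c be real with c − a − b < 0, a, b > 0, c > 0. Then as x → 1⁻, ₂F₁(a, b; c; x) · (1−x)^{a+b−c} → Γ(c)Γ(a+b−c)/(Γ(a)Γ(b)). -/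
open Real Filter

/-! ### Auxiliary lemmas -/

lemma asc_zero (u : ℝ) : asc u 0 = 1 := by simp [asc]

lemma asc_succ (u : ℝ) (j : ℕ) : asc u (j + 1) = asc u j * (u + j) :=
  Finset.prod_range_succ _ _

lemma asc_pos {u : ℝ} (hu : 0 < u) (j : ℕ) : 0 < asc u j :=
  Finset.prod_pos fun i _ => by positivity

/-- `(α + n)/(β + n) → 1`. -/
lemma tendsto_ratio (α β : ℝ) :
    Tendsto (fun n : ℕ => (α + n) / (β + n)) atTop (nhds 1) := by
  have hb : Tendsto (fun n : ℕ => β + (n : ℝ)) atTop atTop :=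
    tendsto_atTop_add_const_left _ β tendsto_natCast_atTop_atTop
  have h0 : Tendsto (fun n : ℕ => (α - β) * (β + (n : ℝ))⁻¹) atTop (nhds ((α - β) * 0)) :=
    tendsto_const_nhds.mul hb.inv_tendsto_atTop
  have h1 : Tendsto (fun n : ℕ => 1 + (α - β) * (β + (n : ℝ))⁻¹) atTop (nhds (1 + (α - β) * 0)) :=
    tendsto_const_nhds.add h0
  rw [show (1 : ℝ) + (α - β) * 0 = 1 by ring] at h1
  refine Tendsto.congr' ?_ h1
  have hev : ∀ᶠ n : ℕ in atTop, 0 < β + (n : ℝ) := hb.eventually_gt_atTop 0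
  filter_upwards [hev] with n hn
  field_simp
  ring

lemma summable_of_pos_ratio {w : ℕ → ℝ} (hw : ∀ j, 0 < w j) {l : ℝ} (hl : l < 1)
    (hr : Tendsto (fun j => w (j + 1) / w j) atTop (nhds l)) : Summable w := by
  refine summable_of_ratio_test_tendsto_lt_one hl
    (Eventually.of_forall fun n => (hw n).ne') (hr.congr fun n => ?_)
  rw [Real.norm_eq_abs, Real.norm_eq_abs, abs_of_pos (hw _), abs_of_pos (hw _)]

lemma summable_mul_pow {w : ℕ → ℝ} (hw : ∀ j, 0 < w j)
    (hr : Tendsto (fun j => w (j + 1) / w j) atTop (nhds 1)) {x : ℝ} (hx : |x| < 1) :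
    Summable fun j => w j * x ^ j := by
  rcases eq_or_ne x 0 with rfl | hx0
  · refine summable_of_ne_finset_zero (s := {0}) fun j hj => ?_
    simp only [Finset.mem_singleton] at hj
    simp [zero_pow hj]
  · have hax : 0 < |x| := abs_pos.mpr hx0
    have habs : Summable fun j => w j * |x| ^ j := by
      refine summable_of_pos_ratio (fun j => mul_pos (hw j) (pow_pos hax j)) hx ?_
      have h := hr.mul_const |x|
      rw [one_mul] at h
      refine h.congr fun n => ?_
      have hxn : |x| ^ n ≠ 0 := pow_ne_zero _ hax.ne'
      rw [pow_succ]
      field_simp [(hw n).ne', (hw (n + 1)).ne']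
    refine Summable.of_norm ?_
    refine habs.congr fun j => ?_
    rw [Real.norm_eq_abs, abs_mul, abs_pow, abs_of_pos (hw j)]

/-- binomial coefficients -/
noncomputable def ebin (s : ℝ) (j : ℕ) : ℝ := asc s j / (Nat.factorial j : ℝ)

lemma ebin_pos {s : ℝ} (hs : 0 < s) (j : ℕ) : 0 < ebin s j := by
  have h1 := asc_pos hs j
  have h2 : (0 : ℝ) < (Nat.factorial j : ℝ) := by
    exact_mod_cast Nat.factorial_pos j
  exact div_pos h1 h2

lemma ebin_zero (s : ℝ) : ebin s 0 = 1 := by simp [ebin, asc_zero]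

lemma ebin_succ (s : ℝ) (j : ℕ) : ebin s (j + 1) * (j + 1) = ebin s j * (s + j) := by
  have hj : ((Nat.factorial j : ℝ)) ≠ 0 := Nat.cast_ne_zero.mpr (Nat.factorial_ne_zero j)
  have hj1 : ((j : ℝ) + 1) ≠ 0 := by positivity
  unfold ebin
  rw [asc_succ, Nat.factorial_succ]
  push_cast
  field_simp

lemma ebin_succ' (s : ℝ) (j : ℕ) : ebin s (j + 1) = ebin s j * (s + j) / ((j : ℝ) + 1) := by
  rw [eq_div_iff (by positivity : ((j : ℝ) + 1) ≠ 0)]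
  exact ebin_succ s j

lemma ebin_ratio (s : ℝ) (hs : 0 < s) :
    Tendsto (fun j => ebin s (j + 1) / ebin s j) atTop (nhds 1) := by
  refine (tendsto_ratio s 1).congr fun j => ?_
  have h1 : (0 : ℝ) < ebin s j := ebin_pos hs j
  have h2 : ((j : ℝ) + 1) ≠ 0 := by positivity
  rw [ebin_succ' s j]
  field_simp
  ring

lemma summable_ebin_mul_pow {s : ℝ} (hs : 0 < s) {x : ℝ} (hx : |x| < 1) :
    Summable fun j => ebin s j * x ^ j :=
  summable_mul_pow (ebin_pos hs) (ebin_ratio s hs) hx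

/-! ### The binomial series -/

lemma binom_tsum {s : ℝ} (hs : 0 < s) {x : ℝ} (hx0 : 0 ≤ x) (hx1 : x < 1) :
    (∑' j : ℕ, ebin s j * x ^ j) = (1 - x) ^ (-s) := by
  set r : ℝ := (x + 1) / 2 with hr_def
  have hr0 : 0 < r := by rw [hr_def]; linarith
  have hxr : x < r := by rw [hr_def]; linarith
  have hr1 : r < 1 := by rw [hr_def]; linarith
  -- pointwise algebraic lemma
  have hpt : ∀ (n : ℕ) (z : ℝ),
      (n : ℝ) * (ebin s n * z ^ n) = z * (ebin s n * ((n : ℝ) * z ^ (n - 1))) := by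
    intro n z
    cases n with
    | zero => simp
    | succ m =>
      simp only [Nat.add_sub_cancel]
      push_cast
      ring
  -- summable bound for derivatives
  have husum : Summable (fun n : ℕ => (n : ℝ) * ebin s n * r ^ (n - 1)) := by
    have h1 : Summable fun n : ℕ => (s + n) * ebin s n * r ^ n := by
      have hw : ∀ j : ℕ, 0 < (s + j) * ebin s j := fun j => by
        have h := ebin_pos hs j
        have h' : (0:ℝ) < s + j := by positivity
        exact mul_pos h' h
      have hw2 : Summable fun j : ℕ => ((s + j) * ebin s j) * r ^ j := by
        refine summable_mul_pow (w := fun j => (s + j) * ebin s j) hw ?_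
          (by rw [abs_of_pos hr0]; exact hr1)
        refine ((tendsto_ratio (s + 1) 1).congr fun j => ?_)
        have h1 : (0 : ℝ) < ebin s j := ebin_pos hs j
        have h2 : ((j : ℝ) + 1) ≠ 0 := by positivity
        have h3 : (0 : ℝ) < s + j := by positivity
        simp only [Nat.cast_add, Nat.cast_one]
        rw [ebin_succ' s j]
        field_simp
        ring
      exact hw2
    have h2 : Summable fun n : ℕ => ((n : ℝ) + 1) * ebin s (n + 1) * r ^ n := by
      refine h1.congr fun n => ?_
      rw [ebin_succ' s n]
      field_simp
    have h3 : Summable fun n : ℕ => ((n + 1 : ℕ) : ℝ) * ebin s (n + 1) * r ^ ((n + 1) - 1) := by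
      refine h2.congr fun n => ?_
      simp only [Nat.add_sub_cancel]
      push_cast
      ring
    exact (summable_nat_add_iff 1).mp h3
  have hbound : ∀ (n : ℕ) (y : ℝ), y ∈ Set.Ioo (-r) r →
      ‖ebin s n * (n * y ^ (n - 1))‖ ≤ (n : ℝ) * ebin s n * r ^ (n - 1) := by
    intro n y hy
    have hyr : |y| ≤ r := by
      rw [abs_le]; exact ⟨hy.1.le, hy.2.le⟩
    have h1 : (0 : ℝ) < ebin s n := ebin_pos hs n
    rw [Real.norm_eq_abs, abs_mul, abs_mul, abs_of_pos h1, Nat.abs_cast, abs_pow]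
    have hyn : |y| ^ (n - 1) ≤ r ^ (n - 1) := pow_le_pow_left₀ (abs_nonneg y) hyr _
    calc ebin s n * ((n : ℝ) * |y| ^ (n - 1)) ≤ ebin s n * ((n : ℝ) * r ^ (n - 1)) := by
          apply mul_le_mul_of_nonneg_left _ h1.le
          exact mul_le_mul_of_nonneg_left hyn (Nat.cast_nonneg n)
      _ = (n : ℝ) * ebin s n * r ^ (n - 1) := by ring
  have h0t : (0 : ℝ) ∈ Set.Ioo (-r) r := ⟨by linarith, by linarith⟩
  have hsum0 : Summable fun n : ℕ => ebin s n * (0 : ℝ) ^ n :=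
    summable_ebin_mul_pow hs (by rw [abs_zero]; linarith)
  have hD : ∀ y ∈ Set.Ioo (-r) r,
      HasDerivAt (fun z : ℝ => ∑' j : ℕ, ebin s j * z ^ j)
        (∑' n : ℕ, ebin s n * (n * y ^ (n - 1))) y := fun y hy =>
    hasDerivAt_tsum_of_isPreconnected husum isOpen_Ioo
      (convex_Ioo _ _).isPreconnected
      (fun n z _ => (hasDerivAt_pow n z).const_mul (ebin s n)) hbound h0t hsum0 hy
  have habs_y : ∀ y ∈ Set.Ioo (-r) r, |y| < 1 := by
    intro y hy
    rw [abs_lt]; exact ⟨by linarith [hy.1], by linarith [hy.2]⟩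
  have hsumf : ∀ y ∈ Set.Ioo (-r) r, Summable fun n : ℕ => ebin s n * y ^ n := fun y hy =>
    summable_ebin_mul_pow hs (habs_y y hy)
  have hsumf' : ∀ y ∈ Set.Ioo (-r) r,
      Summable fun n : ℕ => ebin s n * ((n : ℝ) * y ^ (n - 1)) := fun y hy =>
    Summable.of_norm_bounded husum fun n => hbound n y hy
  -- the ODE
  have hODE : ∀ y ∈ Set.Ioo (-r) r,
      (∑' n : ℕ, ebin s n * ((n : ℝ) * y ^ (n - 1))) * (1 - y)
        = s * ∑' n : ℕ, ebin s n * y ^ n := by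
    intro y hy
    have hs1 := hsumf' y hy
    have hstep1 : (∑' n : ℕ, ebin s n * ((n : ℝ) * y ^ (n - 1)))
        = ∑' n : ℕ, ebin s (n + 1) * (((n : ℝ) + 1) * y ^ n) := by
      rw [Summable.tsum_eq_zero_add hs1]
      simp only [Nat.cast_zero, zero_mul, mul_zero, zero_add, Nat.add_sub_cancel]
      refine tsum_congr fun n => ?_
      push_cast
      ring
    have hstep2 : ∀ n : ℕ, ebin s (n + 1) * (((n : ℝ) + 1) * y ^ n)
        = (s + n) * (ebin s n * y ^ n) := by
      intro n
      have he := ebin_succ s n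
      linear_combination y ^ n * he
    have hB : Summable fun n : ℕ => (n : ℝ) * (ebin s n * y ^ n) := by
      refine (hs1.mul_left y).congr fun n => ?_
      exact (hpt n y).symm
    have hBtsum : (∑' n : ℕ, (n : ℝ) * (ebin s n * y ^ n))
        = y * ∑' n : ℕ, ebin s n * ((n : ℝ) * y ^ (n - 1)) := by
      rw [← tsum_mul_left]
      exact tsum_congr fun n => hpt n y
    have hstep3 : (∑' n : ℕ, ebin s n * ((n : ℝ) * y ^ (n - 1)))
        = s * (∑' n : ℕ, ebin s n * y ^ n)
          + y * ∑' n : ℕ, ebin s n * ((n : ℝ) * y ^ (n - 1)) := by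
      calc (∑' n : ℕ, ebin s n * ((n : ℝ) * y ^ (n - 1)))
          = ∑' n : ℕ, ebin s (n + 1) * (((n : ℝ) + 1) * y ^ n) := hstep1
        _ = ∑' n : ℕ, (s * (ebin s n * y ^ n) + (n : ℝ) * (ebin s n * y ^ n)) := by
            refine tsum_congr fun n => ?_
            rw [hstep2 n]; ring
        _ = s * (∑' n : ℕ, ebin s n * y ^ n)
            + y * ∑' n : ℕ, ebin s n * ((n : ℝ) * y ^ (n - 1)) := by
            rw [Summable.tsum_add ((hsumf y hy).mul_left s) hB, tsum_mul_left, hBtsum]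
    linarith [hstep3]
  -- g has zero derivative
  have hgderiv : ∀ y ∈ Set.Ioo (-r) r,
      HasDerivAt (fun z : ℝ => (∑' j : ℕ, ebin s j * z ^ j) * (1 - z) ^ s) 0 y := by
    intro y hy
    have h1y : (0 : ℝ) < 1 - y := by linarith [hy.2]
    have hd1 := hD y hy
    have hd2 : HasDerivAt (fun z : ℝ => (1 - z) ^ s) (s * (1 - y) ^ (s - 1) * (-1)) y := by
      have hinner : HasDerivAt (fun z : ℝ => 1 - z) (-1) y := by
        simpa using (hasDerivAt_id y).const_sub 1
      exact (Real.hasDerivAt_rpow_const (x := 1 - y) (p := s) (Or.inl h1y.ne')).comp y hinner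
    have hmul := hd1.mul hd2
    refine hmul.congr_deriv ?_
    symm
    have hsplit : (1 - y) ^ s = (1 - y) ^ (s - 1) * (1 - y) := by
      rw [← Real.rpow_add_one h1y.ne' (s - 1)]
      congr 1
      ring
    have hode := hODE y hy
    rw [hsplit]
    linear_combination (-(1 - y) ^ (s - 1)) * hode
  -- constancy
  have hsub : Set.Icc (0 : ℝ) x ⊆ Set.Ioo (-r) r := by
    intro y hy
    exact ⟨by linarith [hy.1], by linarith [hy.2]⟩
  have hconst : (∑' j : ℕ, ebin s j * x ^ j) * (1 - x) ^ s
      = (∑' j : ℕ, ebin s j * (0:ℝ) ^ j) * (1 - 0) ^ s := by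
    have hcont : ContinuousOn (fun z : ℝ => (∑' j : ℕ, ebin s j * z ^ j) * (1 - z) ^ s)
        (Set.Icc 0 x) := fun y hy =>
      ((hgderiv y (hsub hy)).differentiableAt.continuousAt).continuousWithinAt
    have hder : ∀ y ∈ Set.Ico (0 : ℝ) x,
        HasDerivWithinAt (fun z : ℝ => (∑' j : ℕ, ebin s j * z ^ j) * (1 - z) ^ s)
          0 (Set.Ici y) y := fun y hy =>
      (hgderiv y (hsub ⟨hy.1, hy.2.le⟩)).hasDerivWithinAt
    exact constant_of_has_deriv_right_zero hcont hder x (Set.right_mem_Icc.mpr hx0)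
  have hg0 : (∑' j : ℕ, ebin s j * (0:ℝ) ^ j) * ((1:ℝ) - 0) ^ s = 1 := by
    rw [tsum_eq_single 0 (fun j hj => by simp [zero_pow hj])]
    simp [ebin_zero]
  have hfx : (∑' j : ℕ, ebin s j * x ^ j) * (1 - x) ^ s = 1 := by rw [hconst, hg0]
  have hpos : (0 : ℝ) < (1 - x) ^ s := Real.rpow_pos_of_pos (by linarith) s
  have hres : (∑' j : ℕ, ebin s j * x ^ j) = ((1 - x) ^ s)⁻¹ := by
    field_simp
    linarith [hfx]
  rw [hres, Real.rpow_neg (by linarith : (0:ℝ) ≤ 1 - x)]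

/-! ### The Abelian comparison theorem -/

lemma abel_ratio {d e : ℕ → ℝ} {L : ℝ} (hd : ∀ j, 0 ≤ d j) (he : ∀ j, 0 < e j)
    (hsd : ∀ x : ℝ, 0 ≤ x → x < 1 → Summable fun j => d j * x ^ j)
    (hse : ∀ x : ℝ, 0 ≤ x → x < 1 → Summable fun j => e j * x ^ j)
    (hratio : Tendsto (fun j => d j / e j) atTop (nhds L))
    (hE : Tendsto (fun x => ∑' j : ℕ, e j * x ^ j) (nhdsWithin 1 (Set.Iio 1)) atTop) :
    Tendsto (fun x => (∑' j : ℕ, d j * x ^ j) / (∑' j : ℕ, e j * x ^ j))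
      (nhdsWithin 1 (Set.Iio 1)) (nhds L) := by
  rw [Metric.tendsto_nhds]
  intro ε hε
  obtain ⟨N, hN⟩ := (Metric.tendsto_atTop.mp hratio (ε / 2) (by positivity))
  set C : ℝ := ∑ j ∈ Finset.range N, |d j - L * e j| with hC_def
  have hC0 : 0 ≤ C := Finset.sum_nonneg fun j _ => abs_nonneg _
  filter_upwards [Ioo_mem_nhdsLT (show (0:ℝ) < 1 by norm_num),
    hE.eventually (eventually_gt_atTop (max 1 (2 * C / ε)))] with x hx hEx
  obtain ⟨hx0, hx1⟩ := hx
  set D : ℝ := ∑' j : ℕ, d j * x ^ j with hD_def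
  set E : ℝ := ∑' j : ℕ, e j * x ^ j with hE_def
  have hE1 : 1 < E := lt_of_le_of_lt (le_max_left _ _) hEx
  have hE0 : 0 < E := by linarith
  have hCE : 2 * C / ε < E := lt_of_le_of_lt (le_max_right _ _) hEx
  have hsd' := hsd x hx0.le hx1
  have hse' := hse x hx0.le hx1
  have hxp : ∀ j : ℕ, (0:ℝ) < x ^ j := fun j => pow_pos hx0 j
  have hsub : Summable fun j => (d j - L * e j) * x ^ j := by
    refine (hsd'.sub (hse'.mul_left L)).congr fun j => ?_
    ring
  have habs : Summable fun j => |d j - L * e j| * x ^ j := by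
    refine hsub.abs.congr fun j => ?_
    rw [abs_mul, abs_of_pos (hxp j)]
  have h1 : D - L * E = ∑' j : ℕ, (d j - L * e j) * x ^ j := by
    rw [hD_def, hE_def, ← tsum_mul_left, ← Summable.tsum_sub hsd' (hse'.mul_left L)]
    exact tsum_congr fun j => by ring
  have hn : Summable fun j => ‖(d j - L * e j) * x ^ j‖ := by
    refine habs.congr fun j => ?_
    rw [Real.norm_eq_abs, abs_mul, abs_of_pos (hxp j)]
  have h2 : |D - L * E| ≤ ∑' j : ℕ, |d j - L * e j| * x ^ j := by
    rw [h1]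
    have h3 := norm_tsum_le_tsum_norm hn
    rw [Real.norm_eq_abs] at h3
    refine h3.trans_eq (tsum_congr fun j => ?_)
    rw [Real.norm_eq_abs, abs_mul, abs_of_pos (hxp j)]
  have hsplit := Summable.sum_add_tsum_nat_add (f := fun j => |d j - L * e j| * x ^ j) N habs
  have hhead : (∑ j ∈ Finset.range N, |d j - L * e j| * x ^ j) ≤ C := by
    rw [hC_def]
    refine Finset.sum_le_sum fun j _ => ?_
    have h4 : x ^ j ≤ 1 := pow_le_one₀ hx0.le hx1.le
    nlinarith [abs_nonneg (d j - L * e j)]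
  have htail_le : (∑' j : ℕ, |d (j + N) - L * e (j + N)| * x ^ (j + N)) ≤ ε / 2 * E := by
    have hsum_tail : Summable fun j : ℕ => |d (j + N) - L * e (j + N)| * x ^ (j + N) :=
      (summable_nat_add_iff (f := fun j => |d j - L * e j| * x ^ j) N).mpr habs
    have hsum_tail_e : Summable fun j : ℕ => e (j + N) * x ^ (j + N) :=
      (summable_nat_add_iff (f := fun j => e j * x ^ j) N).mpr hse'
    have step1 : (∑' j : ℕ, |d (j + N) - L * e (j + N)| * x ^ (j + N))
        ≤ ∑' j : ℕ, ε / 2 * (e (j + N) * x ^ (j + N)) := by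
      refine Summable.tsum_le_tsum (fun j => ?_) hsum_tail (hsum_tail_e.mul_left _)
      have hj := hN (j + N) (Nat.le_add_left N j)
      rw [Real.dist_eq] at hj
      have heq : |d (j + N) - L * e (j + N)| = |d (j + N) / e (j + N) - L| * e (j + N) := by
        have h7 : (d (j + N) / e (j + N) - L) * e (j + N) = d (j + N) - L * e (j + N) := by
          rw [sub_mul, div_mul_cancel₀ _ (he (j + N)).ne']
        rw [← h7, abs_mul, abs_of_pos (he (j + N))]
      rw [heq]
      have hep := he (j + N)
      have hxpj := hxp (j + N)
      have hmul := mul_le_mul_of_nonneg_right hj.le (mul_pos hep hxpj).le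
      calc |d (j + N) / e (j + N) - L| * e (j + N) * x ^ (j + N)
          = |d (j + N) / e (j + N) - L| * (e (j + N) * x ^ (j + N)) := by ring
        _ ≤ ε / 2 * (e (j + N) * x ^ (j + N)) := hmul
    have step2 : (∑' j : ℕ, e (j + N) * x ^ (j + N)) ≤ E := by
      have h5 := Summable.sum_add_tsum_nat_add (f := fun j => e j * x ^ j) N hse'
      have hhead0 : 0 ≤ ∑ j ∈ Finset.range N, e j * x ^ j :=
        Finset.sum_nonneg fun j _ => (mul_pos (he j) (hxp j)).le
      rw [hE_def]
      linarith [h5]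
    calc (∑' j : ℕ, |d (j + N) - L * e (j + N)| * x ^ (j + N))
        ≤ ∑' j : ℕ, ε / 2 * (e (j + N) * x ^ (j + N)) := step1
      _ = ε / 2 * ∑' j : ℕ, e (j + N) * x ^ (j + N) := tsum_mul_left
      _ ≤ ε / 2 * E := by nlinarith [step2]
  have hkey : |D - L * E| ≤ C + ε / 2 * E := by
    calc |D - L * E| ≤ ∑' j : ℕ, |d j - L * e j| * x ^ j := h2
      _ = (∑ j ∈ Finset.range N, |d j - L * e j| * x ^ j)
          + ∑' j : ℕ, |d (j + N) - L * e (j + N)| * x ^ (j + N) := hsplit.symm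
      _ ≤ C + ε / 2 * E := add_le_add hhead htail_le
  have hClt : C < ε / 2 * E := by
    rw [div_lt_iff₀ hε] at hCE
    nlinarith
  rw [Real.dist_eq]
  have heq2 : D / E - L = (D - L * E) / E := by field_simp
  rw [heq2, abs_div, abs_of_pos hE0, div_lt_iff₀ hE0]
  calc |D - L * E| ≤ C + ε / 2 * E := hkey
    _ < ε / 2 * E + ε / 2 * E := by linarith
    _ = ε * E := by ring

/-! ### Coefficient asymptotics -/

lemma GammaSeq_eq_asc (u : ℝ) (m : ℕ) :
    Real.GammaSeq u m = (m : ℝ) ^ u * (Nat.factorial m : ℝ) / asc u (m + 1) := rfl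

theorem hyp2F1_power_asymptotic (a b c : ℝ) (ha : 0 < a) (hb : 0 < b) (hc : 0 < c)
    (hcab : c - a - b < 0) :
    Tendsto (fun x => hyp2F1 a b c x * (1-x) ^ (a+b-c))
      (nhdsWithin 1 (Set.Iio 1))
      (nhds (Real.Gamma c * Real.Gamma (a+b-c) / (Real.Gamma a * Real.Gamma b))) := by
  have hs : 0 < a + b - c := by linarith
  set s : ℝ := a + b - c with hs_def
  set d : ℕ → ℝ := fun j => asc a j * asc b j / (asc c j * (Nat.factorial j : ℝ)) with hd_def
  have hdpos : ∀ j, 0 < d j := fun j => by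
    have h1 := asc_pos ha j
    have h2 := asc_pos hb j
    have h3 := asc_pos hc j
    have h4 : (0:ℝ) < (Nat.factorial j : ℝ) := by exact_mod_cast Nat.factorial_pos j
    exact div_pos (mul_pos h1 h2) (mul_pos h3 h4)
  have hepos : ∀ j, 0 < ebin s j := fun j => ebin_pos hs j
  -- ratio of d
  have hd_ratio : Tendsto (fun j => d (j + 1) / d j) atTop (nhds 1) := by
    have h := (tendsto_ratio a 1).mul (tendsto_ratio b c)
    rw [one_mul] at h
    refine h.congr fun j => ?_
    have h1 := asc_pos ha j
    have h2 := asc_pos hb j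
    have h3 := asc_pos hc j
    have h4 : (0:ℝ) < (Nat.factorial j : ℝ) := by exact_mod_cast Nat.factorial_pos j
    have h5 : (0:ℝ) < c + j := by positivity
    have h6 : (0:ℝ) < (j:ℝ) + 1 := by positivity
    show (a + (j:ℝ)) / (1 + (j:ℝ)) * ((b + (j:ℝ)) / (c + (j:ℝ))) = d (j + 1) / d j
    rw [hd_def]
    simp only [asc_succ, Nat.factorial_succ]
    push_cast
    field_simp
    ring
  have hsd : ∀ x : ℝ, 0 ≤ x → x < 1 → Summable fun j => d j * x ^ j := by
    intro x hx0 hx1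
    exact summable_mul_pow hdpos hd_ratio (by rwa [abs_of_nonneg hx0])
  have hse : ∀ x : ℝ, 0 ≤ x → x < 1 → Summable fun j => ebin s j * x ^ j := by
    intro x hx0 hx1
    exact summable_ebin_mul_pow hs (by rwa [abs_of_nonneg hx0])
  -- ratio d/e tends to L
  set L : ℝ := Real.Gamma c * Real.Gamma s / (Real.Gamma a * Real.Gamma b) with hL_def
  have hr_de : Tendsto (fun j => d j / ebin s j) atTop (nhds L) := by
    have hGab : Real.Gamma a * Real.Gamma b ≠ 0 :=
      (mul_pos (Real.Gamma_pos_of_pos ha) (Real.Gamma_pos_of_pos hb)).ne'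
    have hGS : Tendsto (fun m : ℕ =>
        Real.GammaSeq c m * Real.GammaSeq s m / (Real.GammaSeq a m * Real.GammaSeq b m))
        atTop (nhds L) := by
      rw [hL_def]
      exact ((Real.GammaSeq_tendsto_Gamma c).mul (Real.GammaSeq_tendsto_Gamma s)).div
        ((Real.GammaSeq_tendsto_Gamma a).mul (Real.GammaSeq_tendsto_Gamma b)) hGab
    have hkey : ∀ m : ℕ, 1 ≤ m →
        d (m + 1) / ebin s (m + 1) =
          Real.GammaSeq c m * Real.GammaSeq s m / (Real.GammaSeq a m * Real.GammaSeq b m) := by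
      intro m hm
      have hm0 : (0:ℝ) < (m:ℝ) := by exact_mod_cast hm
      have hA := asc_pos ha (m + 1)
      have hB := asc_pos hb (m + 1)
      have hC := asc_pos hc (m + 1)
      have hS := asc_pos hs (m + 1)
      have hF : (0:ℝ) < (Nat.factorial (m+1) : ℝ) := by exact_mod_cast Nat.factorial_pos _
      have hFm : (0:ℝ) < (Nat.factorial m : ℝ) := by exact_mod_cast Nat.factorial_pos m
      have hma : (0:ℝ) < (m:ℝ) ^ a := Real.rpow_pos_of_pos hm0 a
      have hmb : (0:ℝ) < (m:ℝ) ^ b := Real.rpow_pos_of_pos hm0 b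
      have hmc : (0:ℝ) < (m:ℝ) ^ c := Real.rpow_pos_of_pos hm0 c
      have hms : (0:ℝ) < (m:ℝ) ^ s := Real.rpow_pos_of_pos hm0 s
      have hde : d (m + 1) / ebin s (m + 1)
          = asc a (m + 1) * asc b (m + 1) / (asc c (m + 1) * asc s (m + 1)) := by
        rw [hd_def]
        unfold ebin
        field_simp
      have hexp : (m:ℝ) ^ c * (m:ℝ) ^ s = (m:ℝ) ^ a * (m:ℝ) ^ b := by
        rw [← Real.rpow_add hm0, ← Real.rpow_add hm0]
        congr 1
        rw [hs_def]; ring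
      rw [hde, GammaSeq_eq_asc, GammaSeq_eq_asc, GammaSeq_eq_asc, GammaSeq_eq_asc]
      have hrw : ((m:ℝ) ^ c * (Nat.factorial m : ℝ) / asc c (m + 1))
            * ((m:ℝ) ^ s * (Nat.factorial m : ℝ) / asc s (m + 1))
            / (((m:ℝ) ^ a * (Nat.factorial m : ℝ) / asc a (m + 1))
              * ((m:ℝ) ^ b * (Nat.factorial m : ℝ) / asc b (m + 1)))
          = ((m:ℝ) ^ c * (m:ℝ) ^ s) / ((m:ℝ) ^ a * (m:ℝ) ^ b)
            * (asc a (m + 1) * asc b (m + 1) / (asc c (m + 1) * asc s (m + 1))) := by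
        field_simp
      rw [hrw, hexp, div_self (by positivity), one_mul]
    have h1 : Tendsto (fun m : ℕ => d (m + 1) / ebin s (m + 1)) atTop (nhds L) := by
      refine Tendsto.congr' ?_ hGS
      filter_upwards [eventually_ge_atTop 1] with m hm
      exact (hkey m hm).symm
    exact (tendsto_add_atTop_iff_nat 1).mp h1
  -- divergence of E
  have hEdiv : Tendsto (fun x : ℝ => ∑' j : ℕ, ebin s j * x ^ j)
      (nhdsWithin 1 (Set.Iio 1)) atTop := by
    have h2 : Tendsto (fun x : ℝ => 1 - x) (nhdsWithin 1 (Set.Iio 1))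
        (nhdsWithin 0 (Set.Ioi 0)) := by
      refine tendsto_nhdsWithin_of_tendsto_nhds_of_eventually_within _ ?_ ?_
      · have h : Tendsto (fun x : ℝ => 1 - x) (nhds 1) (nhds (1 - 1)) :=
          (continuous_const.sub continuous_id).tendsto 1
        rw [sub_self] at h
        exact h.mono_left nhdsWithin_le_nhds
      · filter_upwards [self_mem_nhdsWithin] with x hx
        exact sub_pos.mpr (Set.mem_Iio.mp hx)
    have h3 : Tendsto (fun u : ℝ => u ^ (-s)) (nhdsWithin 0 (Set.Ioi 0)) atTop := by
      have h4 : Tendsto (fun u : ℝ => u ^ s) (nhdsWithin 0 (Set.Ioi 0))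
          (nhdsWithin 0 (Set.Ioi 0)) := by
        refine tendsto_nhdsWithin_of_tendsto_nhds_of_eventually_within _ ?_ ?_
        · have h : Tendsto (fun u : ℝ => u ^ s) (nhds 0) (nhds ((0:ℝ) ^ s)) :=
            (Real.continuousAt_rpow_const 0 s (Or.inr hs.le)).tendsto
          rw [Real.zero_rpow hs.ne'] at h
          exact h.mono_left nhdsWithin_le_nhds
        · filter_upwards [self_mem_nhdsWithin] with u hu
          exact Real.rpow_pos_of_pos hu s
      have h5 := h4.inv_tendsto_nhdsGT_zero
      refine Tendsto.congr' ?_ h5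
      filter_upwards [self_mem_nhdsWithin] with u hu
      rw [Pi.inv_apply, ← Real.rpow_neg (le_of_lt hu)]
    have h6 : Tendsto (fun x : ℝ => (1 - x) ^ (-s)) (nhdsWithin 1 (Set.Iio 1)) atTop :=
      h3.comp h2
    refine Tendsto.congr' ?_ h6
    filter_upwards [Ioo_mem_nhdsLT (show (0:ℝ) < 1 by norm_num)] with x hx
    rw [binom_tsum hs hx.1.le hx.2]
  -- apply the Abelian theorem
  have hmain := abel_ratio (fun j => (hdpos j).le) hepos hsd hse hr_de hEdiv
  refine Tendsto.congr' ?_ hmain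
  filter_upwards [Ioo_mem_nhdsLT (show (0:ℝ) < 1 by norm_num)] with x hx
  have hb1 : (∑' j : ℕ, ebin s j * x ^ j) = (1 - x) ^ (-s) :=
    binom_tsum hs hx.1.le hx.2
  have hd1 : hyp2F1 a b c x = ∑' j : ℕ, d j * x ^ j := by rw [hyp2F1, hd_def]
  rw [hb1, Real.rpow_neg (by linarith [hx.2] : (0:ℝ) ≤ 1 - x), div_eq_mul_inv, inv_inv, hd1]
end

section
/- Let (U, V) be a bivariate normal random vector with mean zero, variances σ_U², σ_V², and correlation coefficient ρ with |ρ| < 1. Then the product W = UV follows the variance-gamma distribution VG(0, 1/(s(1−ρ²)), ρ/(s(1−ρ²)), 0) where s = σ_U σ_V; that is, W has density f_W(x) = (1/(π s √(1−ρ²))) exp(ρx/(s(1−ρ²))) K₀(|x|/(s(1−ρ²))). -/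
open MeasureTheory Real

open Set

lemma lint_image {s : Set ℝ} {f f' : ℝ → ℝ} (hs : MeasurableSet s)
    (hf' : ∀ x ∈ s, HasDerivWithinAt f (f' x) s x) (hf : Set.InjOn f s) (g : ℝ → ENNReal) :
    ∫⁻ x in f '' s, g x = ∫⁻ x in s, ENNReal.ofReal |f' x| * g (f x) := by
  simpa only [ContinuousLinearMap.det_toSpanSingleton] using
    lintegral_image_eq_lintegral_abs_det_fderiv_mul volume hs
      (fun x hx => (hf' x hx).hasFDerivWithinAt) hf g

lemma cosh_ge_self (t : ℝ) (ht : 0 ≤ t) : t ≤ Real.cosh t := by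
  rcases eq_or_lt_of_le ht with h | h
  · simp [← h, Real.one_le_cosh]
  calc t ≤ Real.sinh t := (Real.self_le_sinh_iff).2 ht
  _ ≤ Real.cosh t := by
      rw [Real.sinh_eq, Real.cosh_eq]
      have := Real.exp_pos (-t); linarith

lemma integrable_exp_neg_cosh {z : ℝ} (hz : 0 < z) :
    IntegrableOn (fun t => Real.exp (-z * Real.cosh t)) (Set.Ioi (0:ℝ)) := by
  refine Integrable.mono' (g := fun t => Real.exp (-(z * t))) ?_ ?_ ?_
  · have := exp_neg_integrableOn_Ioi 0 hz
    exact this.congr_fun (fun t _ => by ring_nf) measurableSet_Ioi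
  · exact ((Real.continuous_exp.comp (continuous_const.mul Real.continuous_cosh)).aestronglyMeasurable).restrict
  · filter_upwards [ae_restrict_mem measurableSet_Ioi] with t ht
    rw [Real.norm_eq_abs, Real.abs_exp]
    refine Real.exp_le_exp.2 ?_
    have := cosh_ge_self t (le_of_lt ht)
    nlinarith

lemma lintegral_besselK {z : ℝ} (hz : 0 < z) :
    ∫⁻ t in Set.Ioi (0:ℝ), ENNReal.ofReal (Real.exp (-z * Real.cosh t)) =
      ENNReal.ofReal (besselK 0 z) := by
  rw [besselK]
  simp only [zero_mul, Real.cosh_zero, mul_one]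
  rw [← ofReal_integral_eq_lintegral_ofReal (integrable_exp_neg_cosh hz)]
  · filter_upwards with t using le_of_lt (Real.exp_pos _)

-- symmetric integrand: full line = 2 * Ioi
lemma lintegral_eq_two_Ioi (g : ℝ → ENNReal) (hsymm : ∀ t, g (-t) = g t) :
    ∫⁻ t, g t = 2 * ∫⁻ t in Set.Ioi (0:ℝ), g t := by
  have hU : MeasurableSet (Set.Iio (0:ℝ) ∪ Set.Ioi 0) :=
    measurableSet_Iio.union measurableSet_Ioi
  have hIio : ∫⁻ t in Set.Iio (0:ℝ), g t = ∫⁻ t in Set.Ioi (0:ℝ), g t := by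
    have himg : Neg.neg '' Set.Ioi (0:ℝ) = Set.Iio 0 := by simp
    rw [← himg, lint_image measurableSet_Ioi
      (fun x _ => (hasDerivAt_neg x).hasDerivWithinAt) neg_injective.injOn g]
    simp [hsymm]
  rw [← lintegral_add_compl g hU]
  have h0 : (volume : Measure ℝ) (Set.Iio (0:ℝ) ∪ Set.Ioi 0)ᶜ = 0 := by
    rw [Set.compl_union, Set.compl_Iio, Set.compl_Ioi, Set.Ici_inter_Iic, Set.Icc_self]
    simp
  rw [setLIntegral_measure_zero _ _ h0, add_zero,
    lintegral_union measurableSet_Ioi (((Set.Iic_disjoint_Ioi le_rfl).mono_left Set.Iio_subset_Iic_self)), hIio, two_mul]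

lemma key_subst {a b : ℝ} (ha : 0 < a) (hb : 0 < b) :
    ∫⁻ u in Set.Ioi (0:ℝ), ENNReal.ofReal (Real.exp (-(a*u^2 + b/u^2)) / u) =
      ENNReal.ofReal (besselK 0 (2*Real.sqrt (a*b))) := by
  set c : ℝ := Real.sqrt (Real.sqrt (b/a)) with hc
  have hc0 : 0 < c := Real.sqrt_pos.2 (Real.sqrt_pos.2 (div_pos hb ha))
  have hcsq : c^2 = Real.sqrt (b/a) := Real.sq_sqrt (Real.sqrt_nonneg _)
  set z : ℝ := Real.sqrt (a*b) with hz
  have hz0 : 0 < z := Real.sqrt_pos.2 (mul_pos ha hb)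
  have hac : a * c^2 = z := by
    rw [hcsq, ← Real.sqrt_sq ha.le, ← Real.sqrt_mul (sq_nonneg a), hz]
    congr 1; field_simp; rw [Real.sqrt_sq ha.le]
  have hbc : z * c^2 = b := by
    rw [hcsq, hz, ← Real.sqrt_mul (mul_pos ha hb).le,
      show a*b*(b/a) = b^2 by field_simp, Real.sqrt_sq hb.le]
  have ha' : a = z / c^2 := by rw [← hac]; field_simp
  have hb' : b = z * c^2 := hbc.symm
  have himg : (fun t => c * Real.exp (t/2)) '' Set.univ = Set.Ioi 0 := by
    ext u
    simp only [Set.image_univ, Set.mem_range, Set.mem_Ioi]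
    constructor
    · rintro ⟨t, rfl⟩; positivity
    · intro hu
      exact ⟨2 * Real.log (u / c), by
        rw [show (2:ℝ) * Real.log (u/c) / 2 = Real.log (u/c) by ring,
          Real.exp_log (div_pos hu hc0)]
        field_simp⟩
  have hderiv : ∀ t ∈ Set.univ, HasDerivWithinAt (fun t => c * Real.exp (t/2))
      (c/2 * Real.exp (t/2)) Set.univ t := by
    intro t _
    have : HasDerivAt (fun t : ℝ => c * Real.exp (t/2)) (c * (Real.exp (t/2) * (1/2))) t :=
      (((hasDerivAt_id t).div_const 2).exp).const_mul c
    exact (this.congr_deriv (by ring)).hasDerivWithinAt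
  have hinj : Set.InjOn (fun t => c * Real.exp (t/2)) Set.univ := by
    intro s _ t _ h
    simp only [mul_right_inj' hc0.ne'] at h
    have := Real.exp_injective h
    linarith
  rw [← himg, lint_image MeasurableSet.univ hderiv hinj]
  have hpt : ∀ t : ℝ, ENNReal.ofReal |c/2 * Real.exp (t/2)| *
      ENNReal.ofReal (Real.exp (-(a*(c*Real.exp (t/2))^2 + b/(c*Real.exp (t/2))^2)) / (c*Real.exp (t/2)))
      = ENNReal.ofReal (Real.exp (-(2*z) * Real.cosh t) / 2) := by
    intro t
    rw [← ENNReal.ofReal_mul (abs_nonneg _), abs_of_pos (by positivity)]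
    congr 1
    have he2 : Real.exp (t/2)^2 = Real.exp t := by rw [sq, ← Real.exp_add]; norm_num
    have harg : a*(c*Real.exp (t/2))^2 + b/(c*Real.exp (t/2))^2 = 2*z*Real.cosh t := by
      rw [mul_pow, he2, Real.cosh_eq, Real.exp_neg, ha', hb']
      have hE : Real.exp t ≠ 0 := (Real.exp_pos t).ne'
      field_simp
    rw [harg, eq_div_iff (two_ne_zero)]
    field_simp
  simp only [hpt, setLIntegral_univ]
  have hdiv : ∀ t:ℝ, ENNReal.ofReal (Real.exp (-(2*z) * Real.cosh t) / 2) =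
      ENNReal.ofReal (Real.exp (-(2*z) * Real.cosh t)) * 2⁻¹ := fun t => by
    rw [div_eq_mul_inv, ENNReal.ofReal_mul (Real.exp_pos _).le]
    congr 1
    rw [ENNReal.ofReal_inv_of_pos two_pos, ENNReal.ofReal_ofNat]
  simp only [hdiv]
  rw [lintegral_mul_const' _ _ (by norm_num),
    lintegral_eq_two_Ioi _ (fun t => by rw [Real.cosh_neg]),
    lintegral_besselK (by positivity), hz]
  rw [mul_comm, ← mul_assoc, ENNReal.inv_mul_cancel (by norm_num) (by norm_num), one_mul]

lemma full_line {a b : ℝ} (ha : 0 < a) (hb : 0 < b) :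
    ∫⁻ u, ENNReal.ofReal (Real.exp (-(a*u^2 + b/u^2)) / |u|) =
      ENNReal.ofReal (2 * besselK 0 (2*Real.sqrt (a*b))) := by
  rw [lintegral_eq_two_Ioi _ (fun u => by rw [abs_neg, neg_pow]; norm_num)]
  rw [setLIntegral_congr_fun measurableSet_Ioi
    (fun u (hu : u ∈ Set.Ioi (0:ℝ)) => by rw [abs_of_pos hu]),
    key_subst ha hb, ENNReal.ofReal_mul (by norm_num), ENNReal.ofReal_ofNat]

lemma pointwise_vg {σU σV ρ x : ℝ} (hσU : 0 < σU) (hσV : 0 < σV) (hρ : |ρ| < 1) (hx : x ≠ 0) :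
    ∫⁻ u, ENNReal.ofReal |u⁻¹| * ENNReal.ofReal
        (1/(2*π*σU*σV*Real.sqrt (1-ρ^2)) *
          Real.exp (-(u^2/σU^2 - 2*ρ*u*(x/u)/(σU*σV) + (x/u)^2/σV^2)/(2*(1-ρ^2)))) =
      ENNReal.ofReal (1/(π*(σU*σV)*Real.sqrt (1-ρ^2)) * Real.exp (ρ*x/((σU*σV)*(1-ρ^2))) *
          besselK 0 (|x|/((σU*σV)*(1-ρ^2)))) := by
  have hr : 0 < 1 - ρ^2 := by
    have := abs_lt.1 hρ; nlinarith
  set r := 1 - ρ^2 with hrdef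
  set C : ℝ := 1/(2*π*σU*σV*Real.sqrt r) with hC
  have hC0 : 0 < C := by
    have : 0 < Real.sqrt r := Real.sqrt_pos.2 hr
    have := Real.pi_pos
    positivity
  set a : ℝ := 1/(2*r*σU^2) with hA
  set b : ℝ := x^2/(2*r*σV^2) with hB
  have ha : 0 < a := by positivity
  have hb : 0 < b := by positivity
  set K : ℝ := C * Real.exp (ρ*x/(r*(σU*σV))) with hK
  have hK0 : 0 ≤ K := by positivity
  have hpt : ∀ᵐ u : ℝ, ENNReal.ofReal |u⁻¹| * ENNReal.ofReal
      (C * Real.exp (-(u^2/σU^2 - 2*ρ*u*(x/u)/(σU*σV) + (x/u)^2/σV^2)/(2*r))) =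
      ENNReal.ofReal K * ENNReal.ofReal (Real.exp (-(a*u^2 + b/u^2)) / |u|) := by
    filter_upwards [compl_mem_ae_iff.2 (volume_singleton (a := (0:ℝ)))] with u hu
    have hu0 : u ≠ 0 := hu
    rw [← ENNReal.ofReal_mul (abs_nonneg _), ← ENNReal.ofReal_mul hK0]
    congr 1
    have hexp : Real.exp (-(u^2/σU^2 - 2*ρ*u*(x/u)/(σU*σV) + (x/u)^2/σV^2)/(2*r)) =
        Real.exp (ρ*x/(r*(σU*σV))) * Real.exp (-(a*u^2 + b/u^2)) := by
      rw [← Real.exp_add]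
      congr 1
      rw [hA, hB]
      field_simp
      ring
    rw [hexp, abs_inv]
    rw [hK]
    field_simp
  rw [lintegral_congr_ae hpt, lintegral_const_mul' _ _ ENNReal.ofReal_ne_top,
    full_line ha hb, ← ENNReal.ofReal_mul hK0]
  congr 1
  have hs2 : 2*Real.sqrt (a*b) = |x|/((σU*σV)*r) := by
    rw [hA, hB, show 1/(2*r*σU^2) * (x^2/(2*r*σV^2)) = (x/(2*r*(σU*σV)))^2 by field_simp,
      Real.sqrt_sq_eq_abs, abs_div]
    rw [abs_of_pos (by positivity : (0:ℝ) < 2*r*(σU*σV))]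
    field_simp
  rw [hs2, hK, hC]
  have hπ := Real.pi_pos
  have hsq : (0:ℝ) < Real.sqrt r := Real.sqrt_pos.2 hr
  rw [show ρ*x/(r*(σU*σV)) = ρ*x/((σU*σV)*r) by ring_nf]
  field_simp

theorem product_of_correlated_normals_is_vg {Ω : Type*} [MeasurableSpace Ω] (μ : Measure Ω)
    [IsProbabilityMeasure μ] (U V : Ω → ℝ) (σU σV ρ : ℝ)
    (hσU : 0 < σU) (hσV : 0 < σV) (hρ : |ρ| < 1)
    (hUV : Measure.map (fun ω => (U ω, V ω)) μ =
      (volume : Measure (ℝ × ℝ)).withDensity fun p => ENNReal.ofReal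
        (1/(2*π*σU*σV*Real.sqrt (1-ρ^2)) *
          Real.exp (-(p.1^2/σU^2 - 2*ρ*p.1*p.2/(σU*σV) + p.2^2/σV^2)/(2*(1-ρ^2))))) :
    Measure.map (fun ω => U ω * V ω) μ =
      volume.withDensity fun x => ENNReal.ofReal
        (1/(π*(σU*σV)*Real.sqrt (1-ρ^2)) * Real.exp (ρ*x/((σU*σV)*(1-ρ^2))) *
          besselK 0 (|x|/((σU*σV)*(1-ρ^2)))) := by
  have hr : 0 < 1 - ρ^2 := by have := abs_lt.1 hρ; nlinarith
  have hsqr : 0 < Real.sqrt (1-ρ^2) := Real.sqrt_pos.2 hr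
  have hπ := Real.pi_pos
  set d : ℝ × ℝ → ℝ := fun p =>
      1/(2*π*σU*σV*Real.sqrt (1-ρ^2)) *
        Real.exp (-(p.1^2/σU^2 - 2*ρ*p.1*p.2/(σU*σV) + p.2^2/σV^2)/(2*(1-ρ^2))) with hd
  set D : ℝ × ℝ → ENNReal := fun p => ENNReal.ofReal (d p) with hD
  have hdmeas : Measurable d := by fun_prop
  have hDmeas : Measurable D := hdmeas.ennreal_ofReal
  -- the pushforward measure is nonzero
  have hne : (volume : Measure (ℝ × ℝ)).withDensity D ≠ 0 := by
    intro h
    have h1 : (volume : Measure (ℝ × ℝ)).withDensity D Set.univ = 0 := by rw [h]; rfl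
    rw [withDensity_apply _ MeasurableSet.univ, setLIntegral_univ] at h1
    have hpos : 0 < ∫⁻ p, D p := by
      rw [lintegral_pos_iff_support hDmeas]
      have : Function.support D = Set.univ := by
        ext p
        simp only [Function.mem_support, Set.mem_univ, iff_true, hD]
        have : 0 < d p := by
          have : 0 < Real.exp (-(p.1^2/σU^2 - 2*ρ*p.1*p.2/(σU*σV) + p.2^2/σV^2)/(2*(1-ρ^2))) :=
            Real.exp_pos _
          positivity
        exact (ENNReal.ofReal_pos.2 this).ne'
      rw [this]
      simp
    exact hpos.ne' h1
  -- AEMeasurability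
  have hpair : AEMeasurable (fun ω => (U ω, V ω)) μ := by
    by_contra hcon
    rw [Measure.map_of_not_aemeasurable hcon] at hUV
    exact hne hUV.symm
  have hmmul : Measurable (fun p : ℝ × ℝ => p.1 * p.2) := measurable_fst.mul measurable_snd
  have hcomp : Measure.map (fun ω => U ω * V ω) μ =
      Measure.map (fun p : ℝ × ℝ => p.1 * p.2) (Measure.map (fun ω => (U ω, V ω)) μ) := by
    rw [AEMeasurable.map_map_of_aemeasurable hmmul.aemeasurable hpair]
    rfl
  rw [hcomp, hUV]
  set G : ℝ → ENNReal := fun x => ENNReal.ofReal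
      (1/(π*(σU*σV)*Real.sqrt (1-ρ^2)) * Real.exp (ρ*x/((σU*σV)*(1-ρ^2))) *
        besselK 0 (|x|/((σU*σV)*(1-ρ^2)))) with hG
  ext s hs
  rw [Measure.map_apply hmmul hs, withDensity_apply _ (hs.preimage hmmul), withDensity_apply _ hs]
  have step1 : ∫⁻ p in (fun p : ℝ × ℝ => p.1*p.2) ⁻¹' s, D p
      = ∫⁻ p : ℝ × ℝ, s.indicator (fun _ => (1:ENNReal)) (p.1*p.2) * D p := by
    rw [← lintegral_indicator (hs.preimage hmmul)]
    refine lintegral_congr fun p => ?_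
    by_cases hin : p.1*p.2 ∈ s <;> simp [Set.indicator_apply, hin]
  rw [step1]
  have hΨ : Measurable (fun p : ℝ × ℝ => s.indicator (fun _ => (1:ENNReal)) (p.1*p.2) * D p) :=
    ((measurable_one.indicator hs).comp hmmul).mul hDmeas
  rw [Measure.volume_eq_prod, lintegral_prod _ hΨ.aemeasurable]
  simp only []
  have step2 : ∀ᵐ u : ℝ, (∫⁻ v, s.indicator (fun _ => (1:ENNReal)) (u*v) * D (u,v))
      = ∫⁻ x, s.indicator (fun _ => (1:ENNReal)) x * (ENNReal.ofReal |u⁻¹| * D (u, x/u)) := by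
    filter_upwards [compl_mem_ae_iff.2 (Real.volume_singleton (a := (0:ℝ)))] with u hu
    have hu0 : u ≠ 0 := hu
    have hF : Measurable (fun x => s.indicator (fun _ => (1:ENNReal)) x * D (u, x/u)) :=
      (measurable_one.indicator hs).mul
        (hDmeas.comp (measurable_const.prodMk (measurable_id.div_const u)))
    calc ∫⁻ v, s.indicator (fun _ => (1:ENNReal)) (u*v) * D (u,v)
        = ∫⁻ v, (fun x => s.indicator (fun _ => (1:ENNReal)) x * D (u, x/u)) (u*v) := by
          refine lintegral_congr fun v => ?_
          simp only [mul_div_cancel_left₀ v hu0]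
      _ = ∫⁻ x, s.indicator (fun _ => (1:ENNReal)) x * D (u,x/u)
            ∂(Measure.map (u * ·) volume) := (lintegral_map hF (measurable_const_mul u)).symm
      _ = ENNReal.ofReal |u⁻¹| * ∫⁻ x, s.indicator (fun _ => (1:ENNReal)) x * D (u,x/u) := by
          rw [Real.map_volume_mul_left hu0, lintegral_smul_measure, smul_eq_mul]
      _ = ∫⁻ x, s.indicator (fun _ => (1:ENNReal)) x * (ENNReal.ofReal |u⁻¹| * D (u,x/u)) := by
          rw [← lintegral_const_mul' _ _ ENNReal.ofReal_ne_top]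
          exact lintegral_congr fun x => by ring
  rw [lintegral_congr_ae step2]
  have hmeas2 : AEMeasurable (Function.uncurry fun (u x : ℝ) =>
      s.indicator (fun _ => (1:ENNReal)) x * (ENNReal.ofReal |u⁻¹| * D (u, x/u)))
      ((volume : Measure ℝ).prod volume) := by
    refine Measurable.aemeasurable ?_
    exact ((measurable_one.indicator hs).comp measurable_snd).mul
      ((measurable_fst.inv.abs.ennreal_ofReal).mul
        (hDmeas.comp (measurable_fst.prodMk (measurable_snd.div measurable_fst))))
  rw [lintegral_lintegral_swap hmeas2]
  have step3 : ∀ᵐ x : ℝ, (∫⁻ u, s.indicator (fun _ => (1:ENNReal)) x *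
      (ENNReal.ofReal |u⁻¹| * D (u, x/u))) = s.indicator (fun _ => (1:ENNReal)) x * G x := by
    filter_upwards [compl_mem_ae_iff.2 (Real.volume_singleton (a := (0:ℝ)))] with x hx
    have hx0 : x ≠ 0 := hx
    by_cases hxs : x ∈ s
    · simp only [Set.indicator_of_mem hxs, one_mul]
      exact pointwise_vg hσU hσV hρ hx0
    · simp [Set.indicator_of_notMem hxs]
  rw [lintegral_congr_ae step3]
  rw [show (fun x => s.indicator (fun _ => (1:ENNReal)) x * G x) = s.indicator G from ?_,
    lintegral_indicator hs]
  ext x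
  by_cases hxs : x ∈ s <;> simp [Set.indicator_apply, hxs]
end

section
/- Let X₁ and X₂ be independent random variables, each with the asymmetric Laplace density f_i(x) = (γ_i²/(2α_i)) e^{β_i x − α_i |x|} (i.e. X_i ∼ VG(1/2, α_i, β_i, 0)), where 0 ≤ |β_i| < α_i and γ_i² = α_i² − β_i². Then the density of Z = X₁/X₂ is f_Z(z) = (γ₁² γ₂² / (4 α₁ α₂)) · (1/u₁² + 1/u₂²), where u₁ = α₁|z| + α₂ + β₁z + β₂ and u₂ = α₁|z| + α₂ − β₁z − β₂. -/
open MeasureTheory ProbabilityTheory Real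
open Set

lemma inner_int (α₁ α₂ β₁ β₂ : ℝ) (hβ₁ : |β₁| < α₁) (hβ₂ : |β₂| < α₂) (z : ℝ) :
    ∫⁻ y : ℝ, ENNReal.ofReal (|y| * ((α₁^2-β₁^2)/(2*α₁) * Real.exp (β₁*(z*y) - α₁*|z*y|))
        * ((α₂^2-β₂^2)/(2*α₂) * Real.exp (β₂*y - α₂*|y|)))
      = ENNReal.ofReal ((α₁^2-β₁^2) * (α₂^2-β₂^2) / (4*α₁*α₂) *
          (1/(α₁*|z| + α₂ + β₁*z + β₂)^2 + 1/(α₁*|z| + α₂ - β₁*z - β₂)^2)) := by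
  have hα₁ : 0 < α₁ := lt_of_le_of_lt (abs_nonneg _) hβ₁
  have hα₂ : 0 < α₂ := lt_of_le_of_lt (abs_nonneg _) hβ₂
  set c₁ : ℝ := (α₁^2-β₁^2)/(2*α₁) with hc₁
  set c₂ : ℝ := (α₂^2-β₂^2)/(2*α₂) with hc₂
  have hsq₁ : β₁^2 < α₁^2 := by nlinarith [abs_nonneg β₁, sq_abs β₁, neg_abs_le β₁, le_abs_self β₁]
  have hsq₂ : β₂^2 < α₂^2 := by nlinarith [abs_nonneg β₂, sq_abs β₂, neg_abs_le β₂, le_abs_self β₂]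
  have hd₁ : (0:ℝ) < α₁^2 - β₁^2 := sub_pos.mpr hsq₁
  have hd₂ : (0:ℝ) < α₂^2 - β₂^2 := sub_pos.mpr hsq₂
  have hc₁p : 0 < c₁ := by rw [hc₁]; positivity
  have hc₂p : 0 < c₂ := by rw [hc₂]; positivity
  have hz1 : β₁ * z ≤ α₁ * |z| := by
    calc β₁ * z ≤ |β₁ * z| := le_abs_self _
    _ = |β₁| * |z| := abs_mul _ _
    _ ≤ α₁ * |z| := mul_le_mul_of_nonneg_right hβ₁.le (abs_nonneg z)
  have hz2 : -(β₁ * z) ≤ α₁ * |z| := by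
    calc -(β₁*z) ≤ |β₁ * z| := neg_le_abs _
    _ = |β₁| * |z| := abs_mul _ _
    _ ≤ α₁ * |z| := mul_le_mul_of_nonneg_right hβ₁.le (abs_nonneg z)
  set u₁ : ℝ := α₁*|z| + α₂ + β₁*z + β₂ with hu₁def
  set u₂ : ℝ := α₁*|z| + α₂ - β₁*z - β₂ with hu₂def
  have hu₁ : 0 < u₁ := by rw [hu₁def]; linarith [neg_le_abs β₂]
  have hu₂ : 0 < u₂ := by rw [hu₂def]; linarith [le_abs_self β₂]
  have hsplit : (univ : Set ℝ) =ᵐ[volume] (Iio 0 ∪ Ioi 0 : Set ℝ) := by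
    rw [Iio_union_Ioi]; symm; rw [ae_eq_univ, compl_compl]; exact measure_singleton 0
  rw [← setLIntegral_univ, setLIntegral_congr hsplit,
    lintegral_union measurableSet_Ioi ((Iio_disjoint_Ici le_rfl).mono_right Ioi_subset_Ici_self)]
  have key_int : ∀ u : ℝ, 0 < u →
      ∫⁻ y in Ioi (0:ℝ), ENNReal.ofReal (c₁*c₂ * (y * Real.exp (-(u*y)))) = ENNReal.ofReal (c₁*c₂ * (1/u^2)) := by
    intro u hu
    simp_rw [ENNReal.ofReal_mul (by positivity : (0:ℝ) ≤ c₁*c₂)]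
    rw [lintegral_const_mul' _ _ ENNReal.ofReal_ne_top]
    congr 1
    have hint : IntegrableOn (fun y : ℝ => y * Real.exp (-(u*y))) (Ioi 0) := by
      have := integrableOn_rpow_mul_exp_neg_mul_rpow (p := 1) (s := 1) (by norm_num) zero_lt_one hu
      refine this.congr_fun (fun x hx => ?_) measurableSet_Ioi
      simp [Real.rpow_one, neg_mul]
    rw [← ofReal_integral_eq_lintegral_ofReal hint]
    · congr 1
      have h2 := integral_rpow_mul_exp_neg_mul_Ioi (a := 2) (r := u) (by norm_num) hu
      rw [show ∫ y in Ioi (0:ℝ), y * Real.exp (-(u*y)) = ∫ t in Ioi (0:ℝ), t ^ ((2:ℝ)-1) * Real.exp (-(u*t)) from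
        setIntegral_congr_fun measurableSet_Ioi (fun x hx => by rw [show (2:ℝ)-1 = 1 by norm_num, Real.rpow_one]),
        h2, Real.Gamma_two]
      rw [mul_one, Real.rpow_two, div_pow, one_pow]
    · filter_upwards [self_mem_ae_restrict measurableSet_Ioi] with y hy
      have : (0:ℝ) < y := hy
      positivity
  have hneg : ∫⁻ y in Iio (0:ℝ), ENNReal.ofReal (|y| * (c₁ * Real.exp (β₁*(z*y) - α₁*|z*y|))
      * (c₂ * Real.exp (β₂*y - α₂*|y|)))
      = ∫⁻ y in Ioi (0:ℝ), ENNReal.ofReal (c₁*c₂ * (y * Real.exp (-(u₁*y)))) := by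
    have hmp : MeasurePreserving (fun y : ℝ => -y) volume volume := Measure.measurePreserving_neg _
    have hemb : MeasurableEmbedding (fun y : ℝ => -y) := (Homeomorph.neg ℝ).measurableEmbedding
    have h := hmp.setLIntegral_comp_emb hemb
      (fun y => ENNReal.ofReal (|y| * (c₁ * Real.exp (β₁*(z*y) - α₁*|z*y|))
        * (c₂ * Real.exp (β₂*y - α₂*|y|)))) (Ioi 0)
    have himg : (fun y : ℝ => -y) '' (Ioi 0) = Iio 0 := by
      ext x
      simp only [mem_image, mem_Ioi, mem_Iio]
      constructor
      · rintro ⟨a, ha, rfl⟩; linarith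
      · intro hx; exact ⟨-x, by linarith, by ring⟩
    rw [himg] at h
    rw [← h]
    refine setLIntegral_congr_fun measurableSet_Ioi (fun y hy => ?_)
    have hy' : (0:ℝ) < y := hy
    congr 1
    have habs : |(-y : ℝ)| = y := by rw [abs_neg, abs_of_pos hy']
    have habs2 : |z * -y| = |z| * y := by rw [abs_mul, habs]
    have hexp : Real.exp (β₁*(z*(-y)) - α₁*(abs z*y)) * Real.exp (β₂*(-y) - α₂*y) = Real.exp (-(u₁*y)) := by
      rw [← Real.exp_add]; congr 1; rw [hu₁def]; ring
    rw [habs, habs2, ← hexp]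
    ring
  have hpos : ∫⁻ y in Ioi (0:ℝ), ENNReal.ofReal (|y| * (c₁ * Real.exp (β₁*(z*y) - α₁*|z*y|))
      * (c₂ * Real.exp (β₂*y - α₂*|y|)))
      = ∫⁻ y in Ioi (0:ℝ), ENNReal.ofReal (c₁*c₂ * (y * Real.exp (-(u₂*y)))) := by
    refine setLIntegral_congr_fun measurableSet_Ioi (fun y hy => ?_)
    have hy' : (0:ℝ) < y := hy
    congr 1
    have habs : |y| = y := abs_of_pos hy'
    have habs2 : |z * y| = |z| * y := by rw [abs_mul, habs]
    have hexp : Real.exp (β₁*(z*y) - α₁*(abs z*y)) * Real.exp (β₂*y - α₂*y) = Real.exp (-(u₂*y)) := by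
      rw [← Real.exp_add]; congr 1; rw [hu₂def]; ring
    rw [habs, habs2, ← hexp]
    ring
  rw [hneg, hpos, key_int u₁ hu₁, key_int u₂ hu₂, ← ENNReal.ofReal_add (by positivity) (by positivity)]
  congr 1
  rw [hc₁, hc₂]
  field_simp
  ring


theorem asymmetric_laplace_ratio_density {Ω : Type*} [MeasurableSpace Ω] (μ : Measure Ω)
    [IsProbabilityMeasure μ] (X₁ X₂ : Ω → ℝ) (α₁ α₂ β₁ β₂ : ℝ)
    (hβ₁ : |β₁| < α₁) (hβ₂ : |β₂| < α₂)
    (hX₁ : Measure.map X₁ μ = volume.withDensity fun x =>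
      ENNReal.ofReal ((α₁^2-β₁^2)/(2*α₁) * Real.exp (β₁*x - α₁*|x|)))
    (hX₂ : Measure.map X₂ μ = volume.withDensity fun x =>
      ENNReal.ofReal ((α₂^2-β₂^2)/(2*α₂) * Real.exp (β₂*x - α₂*|x|)))
    (hInd : IndepFun X₁ X₂ μ) :
    Measure.map (fun ω => X₁ ω / X₂ ω) μ =
      volume.withDensity fun z => ENNReal.ofReal
        ((α₁^2-β₁^2) * (α₂^2-β₂^2) / (4*α₁*α₂) *
          (1/(α₁*|z| + α₂ + β₁*z + β₂)^2 + 1/(α₁*|z| + α₂ - β₁*z - β₂)^2)) := by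
  
  have hα₁ : 0 < α₁ := lt_of_le_of_lt (abs_nonneg _) hβ₁
  have hα₂ : 0 < α₂ := lt_of_le_of_lt (abs_nonneg _) hβ₂
  have hsq₁ : β₁^2 < α₁^2 := by nlinarith [abs_nonneg β₁, sq_abs β₁, neg_abs_le β₁, le_abs_self β₁]
  have hsq₂ : β₂^2 < α₂^2 := by nlinarith [abs_nonneg β₂, sq_abs β₂, neg_abs_le β₂, le_abs_self β₂]
  have hd₁ : (0:ℝ) < α₁^2 - β₁^2 := sub_pos.mpr hsq₁
  have hd₂ : (0:ℝ) < α₂^2 - β₂^2 := sub_pos.mpr hsq₂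
  set F₁ : ℝ → ENNReal := fun x => ENNReal.ofReal ((α₁^2-β₁^2)/(2*α₁) * Real.exp (β₁*x - α₁*|x|)) with hF₁def
  set F₂ : ℝ → ENNReal := fun x => ENNReal.ofReal ((α₂^2-β₂^2)/(2*α₂) * Real.exp (β₂*x - α₂*|x|)) with hF₂def
  have hF₁m : Measurable F₁ := by rw [hF₁def]; exact Measurable.ennreal_ofReal (by fun_prop)
  have hF₂m : Measurable F₂ := by rw [hF₂def]; exact Measurable.ennreal_ofReal (by fun_prop)
  have hne₁ : volume.withDensity F₁ ≠ 0 := by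
    intro h
    have h2 : (volume.withDensity F₁) univ = 0 := by rw [h]; rfl
    rw [withDensity_apply _ MeasurableSet.univ, setLIntegral_univ] at h2
    have hpos : 0 < ∫⁻ x, F₁ x := by
      rw [lintegral_pos_iff_support hF₁m]
      have hsup : Function.support F₁ = univ := by
        ext x
        simp only [Function.mem_support, mem_univ, iff_true, hF₁def]
        rw [← pos_iff_ne_zero, ENNReal.ofReal_pos]
        positivity
      rw [hsup, Real.volume_univ]
      exact ENNReal.zero_lt_top
    exact absurd h2 hpos.ne'
  have hne₂ : volume.withDensity F₂ ≠ 0 := by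
    intro h
    have h2 : (volume.withDensity F₂) univ = 0 := by rw [h]; rfl
    rw [withDensity_apply _ MeasurableSet.univ, setLIntegral_univ] at h2
    have hpos : 0 < ∫⁻ x, F₂ x := by
      rw [lintegral_pos_iff_support hF₂m]
      have hsup : Function.support F₂ = univ := by
        ext x
        simp only [Function.mem_support, mem_univ, iff_true, hF₂def]
        rw [← pos_iff_ne_zero, ENNReal.ofReal_pos]
        positivity
      rw [hsup, Real.volume_univ]
      exact ENNReal.zero_lt_top
    exact absurd h2 hpos.ne'
  have hX₁m : AEMeasurable X₁ μ := by
    by_contra h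
    rw [Measure.map_of_not_aemeasurable h] at hX₁
    exact hne₁ hX₁.symm
  have hX₂m : AEMeasurable X₂ μ := by
    by_contra h
    rw [Measure.map_of_not_aemeasurable h] at hX₂
    exact hne₂ hX₂.symm
  haveI hprob₁ : IsProbabilityMeasure (volume.withDensity F₁) := by
    rw [← hX₁]; exact Measure.isProbabilityMeasure_map hX₁m
  haveI hprob₂ : IsProbabilityMeasure (volume.withDensity F₂) := by
    rw [← hX₂]; exact Measure.isProbabilityMeasure_map hX₂m
  have hmap : Measure.map (fun ω => (X₁ ω, X₂ ω)) μ
      = (volume.withDensity F₁).prod (volume.withDensity F₂) := by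
    rw [← hX₁, ← hX₂]
    exact (indepFun_iff_map_prod_eq_prod_map_map hX₁m hX₂m).mp hInd
  have hdiv : Measurable (fun p : ℝ × ℝ => p.1 / p.2) := measurable_fst.div measurable_snd
  have hcomp : Measure.map (fun ω => X₁ ω / X₂ ω) μ
      = Measure.map (fun p : ℝ × ℝ => p.1 / p.2)
          ((volume.withDensity F₁).prod (volume.withDensity F₂)) := by
    rw [← hmap, AEMeasurable.map_map_of_aemeasurable hdiv.aemeasurable (hX₁m.prodMk hX₂m)]
    rfl
  rw [hcomp]
  refine Measure.ext fun s hs => ?_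
  rw [Measure.map_apply hdiv hs, withDensity_apply _ hs]
  have hT : MeasurableSet ((fun p : ℝ × ℝ => p.1 / p.2) ⁻¹' s) := hdiv hs
  rw [← Measure.prod_swap, Measure.map_apply measurable_swap hT,
    Measure.prod_apply (measurable_swap hT)]
  have h0 : ∀ᵐ y : ℝ ∂volume, y ≠ 0 := by
    rw [ae_iff]
    simp only [ne_eq, not_not, setOf_eq_eq_singleton]
    exact measure_singleton 0
  rw [lintegral_withDensity_eq_lintegral_mul volume hF₂m
    (measurable_measure_prodMk_left (measurable_swap hT))]
  have hstep : ∫⁻ y, (F₂ * fun y => (volume.withDensity F₁)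
        (Prod.mk y ⁻¹' (Prod.swap ⁻¹' ((fun p : ℝ × ℝ => p.1 / p.2) ⁻¹' s)))) y ∂volume
      = ∫⁻ y, ∫⁻ t in s, F₂ y * (ENNReal.ofReal |y| * F₁ (y * t)) ∂volume ∂volume := by
    refine lintegral_congr_ae ?_
    filter_upwards [h0] with y hy
    have hset : Prod.mk y ⁻¹' (Prod.swap ⁻¹' ((fun p : ℝ × ℝ => p.1 / p.2) ⁻¹' s))
        = (fun x => x / y) ⁻¹' s := rfl
    have hAm : MeasurableSet ((fun x => x / y) ⁻¹' s) := (measurable_id.div_const y) hs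
    simp only [Pi.mul_apply, hset]
    rw [withDensity_apply _ hAm]
    have hvol : (ENNReal.ofReal |y|) • Measure.map (fun t => y * t) volume = volume :=
      Real.smul_map_volume_mul_left hy
    conv_lhs => rw [← hvol]
    rw [Measure.restrict_smul, lintegral_smul_measure, Measure.restrict_map
      (measurable_const_mul y) hAm, lintegral_map (hF₁m) (measurable_const_mul y)]
    have hpre : (fun t => y * t) ⁻¹' ((fun x => x / y) ⁻¹' s) = s := by
      ext t
      simp [mul_div_assoc, mul_div_cancel_left₀ _ hy, mul_comm y t, mul_div_cancel_right₀ _ hy]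
    rw [hpre, smul_eq_mul, lintegral_const_mul' _ _ ENNReal.ofReal_ne_top,
      lintegral_const_mul' _ _ ENNReal.ofReal_ne_top]
  rw [hstep]
  rw [lintegral_lintegral_swap]
  · refine setLIntegral_congr_fun hs (fun t ht => ?_)
    have hrw : ∀ y : ℝ, F₂ y * (ENNReal.ofReal |y| * F₁ (y * t))
        = ENNReal.ofReal (|y| * ((α₁^2-β₁^2)/(2*α₁) * Real.exp (β₁*(t*y) - α₁*|t*y|))
            * ((α₂^2-β₂^2)/(2*α₂) * Real.exp (β₂*y - α₂*|y|))) := by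
      intro y
      rw [mul_comm y t, hF₁def, hF₂def]
      rw [ENNReal.ofReal_mul (by positivity : (0:ℝ) ≤ |y| * ((α₁^2-β₁^2)/(2*α₁) * Real.exp (β₁*(t*y) - α₁*|t*y|))),
        ENNReal.ofReal_mul (abs_nonneg y)]
      ring
    simp_rw [hrw]
    exact inner_int α₁ α₂ β₁ β₂ hβ₁ hβ₂ t
  · apply Measurable.aemeasurable
    show Measurable ((fun p : ℝ × ℝ => F₂ p.1) * ((fun p : ℝ × ℝ => ENNReal.ofReal |p.1|) * fun p : ℝ × ℝ => F₁ (p.1 * p.2)))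
    apply Measurable.mul
    · exact hF₂m.comp measurable_fst
    · apply Measurable.mul
      · exact Measurable.ennreal_ofReal (by fun_prop)
      · exact hF₁m.comp (measurable_fst.mul measurable_snd)
end
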